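/- arXiv:1210.7168 — 5 statements merged into one kernel-verified Lean document; each statement's English description precedes it below -/
import Mathlib

section
/- Let t be a positive integer, β > 0, and let X₁, …, X_t be i.i.d. non-negative real random variables. Then P(X₁ ≥ β, X₁X₂ ≥ β², …, X₁⋯X_t ≥ β^t) ≥ (1/t) · P(X₁⋯X_t ≥ β^t). -/
open MeasureTheory ProbabilityTheory Finset
open scoped ENNReal

/-- Sum of a rotated block of `b` in terms of prefix sums. -/
private lemma rot_sum (b : ℕ → ℝ) {t r : ℕ} (hr : r < t) :
    ∀ m, m ≤ t → ∑ i ∈ range m, b ((r + i) % t)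
      = (∑ i ∈ range (min (r + m) t), b i) - (∑ i ∈ range r, b i)
        + ∑ i ∈ range (r + m - t), b i := by
  intro m
  induction m with
  | zero =>
    intro _
    simp [min_eq_left hr.le, Nat.sub_eq_zero_of_le hr.le]
  | succ m ih =>
    intro hm
    rw [Finset.sum_range_succ, ih (Nat.le_of_succ_le hm)]
    rcases lt_or_ge (r + m) t with h | h
    · have h1 : (r + m) % t = r + m := Nat.mod_eq_of_lt h
      have h2 : min (r + m) t = r + m := min_eq_left h.le
      have h3 : min (r + (m + 1)) t = r + m + 1 := by omega
      have h4 : r + m - t = 0 := by omega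
      have h5 : r + (m + 1) - t = 0 := by omega
      rw [h1, h2, h3, h4, h5, Finset.sum_range_succ]
      ring
    · have h1 : (r + m) % t = r + m - t := by
        rw [Nat.mod_eq_sub_mod h]
        exact Nat.mod_eq_of_lt (by omega)
      have h2 : min (r + m) t = t := min_eq_right h
      have h3 : min (r + (m + 1)) t = t := min_eq_right (by omega)
      have h4 : r + (m + 1) - t = (r + m - t) + 1 := by omega
      rw [h1, h2, h3, h4, Finset.sum_range_succ]
      ring

/-- Cycle lemma: if the full product is at least `β ^ t`, then some rotation has all
partial products at least the corresponding powers of `β`. -/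
private lemma cycle_exists {t : ℕ} (ht : 0 < t) {β : ℝ} (hβ : 0 < β) (a : ℕ → ℝ)
    (hnn : ∀ i, 0 ≤ a i) (h : β ^ t ≤ ∏ i ∈ range t, a i) :
    ∃ r < t, ∀ s < t, β ^ (s + 1) ≤ ∏ i ∈ range (s + 1), a ((r + i) % t) := by
  have hpos : ∀ i, i < t → 0 < a i := by
    intro i hi
    rcases (hnn i).lt_or_eq with h' | h'
    · exact h'
    · exfalso
      have hz : (∏ j ∈ range t, a j) = 0 :=
        Finset.prod_eq_zero (mem_range.2 hi) h'.symm
      rw [hz] at h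
      exact absurd h (not_le.2 (pow_pos hβ t))
  set b : ℕ → ℝ := fun i => Real.log (a i) - Real.log β with hb
  have hSt : 0 ≤ ∑ i ∈ range t, b i := by
    have hlog := (Real.log_le_log_iff (pow_pos hβ t) (lt_of_lt_of_le (pow_pos hβ t) h)).2 h
    rw [Real.log_pow, Real.log_prod (fun i hi => (hpos i (mem_range.1 hi)).ne')] at hlog
    simp only [hb, Finset.sum_sub_distrib, Finset.sum_const, card_range, nsmul_eq_mul]
    linarith
  obtain ⟨r, hrmem, hrmin⟩ :=
    Finset.exists_min_image (range t) (fun k => ∑ i ∈ range k, b i) ⟨0, mem_range.2 ht⟩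
  have hr := mem_range.1 hrmem
  have hSr : (∑ i ∈ range r, b i) ≤ 0 := by simpa using hrmin 0 (mem_range.2 ht)
  refine ⟨r, hr, fun s hs => ?_⟩
  have hsum : 0 ≤ ∑ i ∈ range (s + 1), b ((r + i) % t) := by
    rw [rot_sum b hr (s + 1) (Nat.succ_le_of_lt hs)]
    rcases lt_or_ge (r + (s + 1)) t with h1 | h1
    · rw [min_eq_left h1.le, Nat.sub_eq_zero_of_le h1.le, Finset.sum_range_zero]
      have := hrmin (r + (s + 1)) (mem_range.2 h1)
      linarith
    · rw [min_eq_right h1]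
      have h2 : r + (s + 1) - t < t := by omega
      have := hrmin (r + (s + 1) - t) (mem_range.2 h2)
      linarith
  have hppos : 0 < ∏ i ∈ range (s + 1), a ((r + i) % t) :=
    Finset.prod_pos fun i _ => hpos _ (Nat.mod_lt _ ht)
  rw [← Real.log_le_log_iff (pow_pos hβ _) hppos, Real.log_pow,
    Real.log_prod (fun i _ => (hpos _ (Nat.mod_lt _ ht)).ne')]
  simp only [hb, Finset.sum_sub_distrib, Finset.sum_const, card_range, nsmul_eq_mul] at hsum
  push_cast at hsum ⊢
  linarith

/-- The law of the vector `(X (σ 0), …, X (σ (t-1)))` of i.i.d. random variables is the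
product of the common marginal law. -/
private lemma vec_law {Ω : Type*} [MeasurableSpace Ω] (P : Measure Ω) [IsProbabilityMeasure P]
    (t : ℕ) (X : ℕ → Ω → ℝ) (hmeas : ∀ i, Measurable (X i))
    (hindep : iIndepFun X P)
    (hident : ∀ i, IdentDistrib (X i) (X 0) P P)
    (σ : Fin t → ℕ) (hσlt : ∀ i, σ i < t) (hσinj : Function.Injective σ) :
    P.map (fun ω (i : Fin t) => X (σ i) ω)
      = Measure.pi (fun _ : Fin t => P.map (X 0)) := by
  classical
  -- σ viewed as an equiv of Fin t
  let σ' : Fin t → Fin t := fun i => ⟨σ i, hσlt i⟩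
  have hσ'inj : Function.Injective σ' := by
    intro i j hij
    exact hσinj (congrArg Fin.val hij)
  have hσ'bij : Function.Bijective σ' := Finite.injective_iff_bijective.1 hσ'inj
  let e : Fin t ≃ Fin t := Equiv.ofBijective σ' hσ'bij
  have hY : Measurable (fun ω (i : Fin t) => X (σ i) ω) :=
    measurable_pi_lambda _ fun i => hmeas _
  refine (Measure.pi_eq fun s hs => ?_).symm
  rw [Measure.map_apply hY (MeasurableSet.univ_pi hs)]
  set sets : ℕ → Set ℝ := fun n => if h : n < t then s (e.symm ⟨n, h⟩) else Set.univ with hsets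
  have hsetsm : ∀ n ∈ range t, MeasurableSet (sets n) := by
    intro n hn
    have hn' := mem_range.1 hn
    simp only [hsets, dif_pos hn']
    exact hs _
  have hpre : (fun ω (i : Fin t) => X (σ i) ω) ⁻¹' Set.pi Set.univ s
      = ⋂ j ∈ range t, X j ⁻¹' sets j := by
    ext ω
    simp only [Set.mem_preimage, Set.mem_pi, Set.mem_univ, forall_true_left,
      Set.mem_iInter, mem_range]
    constructor
    · intro hω j hj
      have h1 := hω (e.symm ⟨j, hj⟩)
      have h2 : σ (e.symm ⟨j, hj⟩) = j := by
        have : σ' (e.symm ⟨j, hj⟩) = ⟨j, hj⟩ := e.apply_symm_apply ⟨j, hj⟩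
        exact congrArg Fin.val this
      simp only [hsets, dif_pos hj, Set.mem_preimage]
      rw [h2] at h1
      exact h1
    · intro hω i
      have h1 := hω (σ i) (hσlt i)
      have h2 : e.symm ⟨σ i, hσlt i⟩ = i := by
        have : σ' i = ⟨σ i, hσlt i⟩ := rfl
        rw [← this]
        exact e.symm_apply_apply i
      simp only [hsets, dif_pos (hσlt i), Set.mem_preimage, h2] at h1
      exact h1
  rw [hpre, hindep.measure_inter_preimage_eq_mul (range t) hsetsm]
  have hmarg : ∀ j ∈ range t, P (X j ⁻¹' sets j) = (P.map (X 0)) (sets j) := by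
    intro j hj
    rw [← Measure.map_apply (hmeas j) (hsetsm j hj), (hident j).map_eq]
  rw [Finset.prod_congr rfl hmarg, ← Fin.prod_univ_eq_prod_range (fun j => (P.map (X 0)) (sets j)) t]
  have : ∀ i : Fin t, sets (i : ℕ) = s (e.symm i) := by
    intro i
    simp only [hsets, dif_pos i.isLt]
  calc ∏ i : Fin t, (P.map (X 0)) (sets (i : ℕ))
      = ∏ i : Fin t, (P.map (X 0)) (s (e.symm i)) := by
        exact Finset.prod_congr rfl fun i _ => by rw [this i]
    _ = ∏ i : Fin t, (P.map (X 0)) (s i) := Equiv.prod_comp e.symm (fun i => (P.map (X 0)) (s i))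

/-- Rotation lemma (Andersen–Dwass): for i.i.d. nonnegative random variables
`X 0, …, X (t-1)` and `β > 0`, the probability that all partial products
`X 0 ⋯ X s ≥ β^(s+1)` (for `s < t`) is at least `1/t` times the probability that
the full product `X 0 ⋯ X (t-1) ≥ β^t`. -/
theorem rotation_lemma
    {Ω : Type*} [MeasurableSpace Ω] (P : Measure Ω) [IsProbabilityMeasure P]
    (t : ℕ) (ht : 0 < t) (β : ℝ) (hβ : 0 < β)
    (X : ℕ → Ω → ℝ)
    (hmeas : ∀ i, Measurable (X i))
    (hnonneg : ∀ i ω, 0 ≤ X i ω)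
    (hindep : iIndepFun X P)
    (hident : ∀ i, IdentDistrib (X i) (X 0) P P) :
    (t : ℝ≥0∞)⁻¹ * P {ω | β ^ t ≤ ∏ i ∈ range t, X i ω}
      ≤ P {ω | ∀ s < t, β ^ (s + 1) ≤ ∏ i ∈ range (s + 1), X i ω} := by
  classical
  set ν : Measure ℝ := P.map (X 0) with hν
  set E : Set (Fin t → ℝ) :=
    {x | ∀ s < t, β ^ (s + 1) ≤ ∏ i ∈ range (s + 1), x ⟨i % t, Nat.mod_lt i ht⟩} with hEdef
  have hEmeas : MeasurableSet E := by
    have hE2 : E = ⋂ s ∈ Set.Iio t,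
        {x : Fin t → ℝ | β ^ (s + 1) ≤ ∏ i ∈ range (s + 1), x ⟨i % t, Nat.mod_lt i ht⟩} := by
      ext x
      simp [hEdef, Set.mem_iInter]
    rw [hE2]
    exact MeasurableSet.biInter (Set.to_countable _) fun s _ =>
      measurableSet_le measurable_const (Finset.measurable_prod _ fun i _ => by exact measurable_pi_apply _)
  have hB : ∀ r < t,
      P {ω | ∀ s < t, β ^ (s + 1) ≤ ∏ i ∈ range (s + 1), X ((r + i) % t) ω}
        = Measure.pi (fun _ : Fin t => ν) E := by
    intro r hr
    set σ : Fin t → ℕ := fun i => (r + (i : ℕ)) % t with hσdef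
    have hσlt : ∀ i, σ i < t := fun i => Nat.mod_lt _ ht
    have hσinj : Function.Injective σ := by
      intro i j hij
      simp only [hσdef] at hij
      have : (i : ℕ) % t = (j : ℕ) % t := Nat.ModEq.add_left_cancel' r hij
      rw [Nat.mod_eq_of_lt i.isLt, Nat.mod_eq_of_lt j.isLt] at this
      exact Fin.ext this
    have hset : {ω | ∀ s < t, β ^ (s + 1) ≤ ∏ i ∈ range (s + 1), X ((r + i) % t) ω}
        = (fun ω (i : Fin t) => X (σ i) ω) ⁻¹' E := by
      ext ω
      simp only [Set.mem_preimage, hEdef, Set.mem_setOf_eq]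
      refine forall_congr' fun s => ?_
      refine imp_congr_right fun hs => ?_
      have hprod : (∏ i ∈ range (s + 1),
          (fun (i : Fin t) => X (σ i) ω) ⟨i % t, Nat.mod_lt i ht⟩)
          = ∏ i ∈ range (s + 1), X ((r + i) % t) ω := by
        refine Finset.prod_congr rfl fun i hi => ?_
        have hi' : i < t := lt_of_le_of_lt (Nat.lt_succ_iff.1 (mem_range.1 hi)) hs
        simp only [hσdef]
        rw [Nat.mod_eq_of_lt hi']
      rw [hprod]
    rw [hset,
      ← Measure.map_apply (measurable_pi_lambda _ fun i => hmeas _) hEmeas,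
      vec_law P t X hmeas hindep hident σ hσlt hσinj]
  have hB0 : {ω | ∀ s < t, β ^ (s + 1) ≤ ∏ i ∈ range (s + 1), X i ω}
      = {ω | ∀ s < t, β ^ (s + 1) ≤ ∏ i ∈ range (s + 1), X ((0 + i) % t) ω} := by
    ext ω
    simp only [Set.mem_setOf_eq]
    refine forall_congr' fun s => ?_
    refine imp_congr_right fun hs => ?_
    have hprod : (∏ i ∈ range (s + 1), X ((0 + i) % t) ω)
        = ∏ i ∈ range (s + 1), X i ω := by
      refine Finset.prod_congr rfl fun i hi => ?_
      have hi' : i < t := lt_of_le_of_lt (Nat.lt_succ_iff.1 (mem_range.1 hi)) hs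
      rw [Nat.zero_add, Nat.mod_eq_of_lt hi']
    rw [hprod]
  have hsub : {ω | β ^ t ≤ ∏ i ∈ range t, X i ω}
      ⊆ ⋃ r ∈ range t,
          {ω | ∀ s < t, β ^ (s + 1) ≤ ∏ i ∈ range (s + 1), X ((r + i) % t) ω} := by
    intro ω hω
    obtain ⟨r, hr, hrr⟩ := cycle_exists ht hβ (fun i => X i ω) (fun i => hnonneg i ω) hω
    exact Set.mem_biUnion (mem_range.2 hr) hrr
  have hA : P {ω | β ^ t ≤ ∏ i ∈ range t, X i ω}
      ≤ (t : ℝ≥0∞) * Measure.pi (fun _ : Fin t => ν) E := by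
    calc P {ω | β ^ t ≤ ∏ i ∈ range t, X i ω}
        ≤ P (⋃ r ∈ range t,
              {ω | ∀ s < t, β ^ (s + 1) ≤ ∏ i ∈ range (s + 1), X ((r + i) % t) ω}) :=
          measure_mono hsub
      _ ≤ ∑ r ∈ range t,
            P {ω | ∀ s < t, β ^ (s + 1) ≤ ∏ i ∈ range (s + 1), X ((r + i) % t) ω} :=
          measure_biUnion_finset_le _ _
      _ = ∑ _r ∈ range t, Measure.pi (fun _ : Fin t => ν) E :=
          Finset.sum_congr rfl fun r hr => hB r (mem_range.1 hr)
      _ = (t : ℝ≥0∞) * Measure.pi (fun _ : Fin t => ν) E := by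
          simp [Finset.sum_const, card_range, nsmul_eq_mul]
  have hgoalR : P {ω | ∀ s < t, β ^ (s + 1) ≤ ∏ i ∈ range (s + 1), X i ω}
      = Measure.pi (fun _ : Fin t => ν) E := by
    rw [hB0]; exact hB 0 ht
  rw [hgoalR]
  calc (t : ℝ≥0∞)⁻¹ * P {ω | β ^ t ≤ ∏ i ∈ range t, X i ω}
      ≤ (t : ℝ≥0∞)⁻¹ * ((t : ℝ≥0∞) * Measure.pi (fun _ : Fin t => ν) E) :=
        mul_le_mul_right hA _
    _ = Measure.pi (fun _ : Fin t => ν) E := by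
        rw [← mul_assoc, ENNReal.inv_mul_cancel (by exact_mod_cast ht.ne')
          (ENNReal.natCast_ne_top t), one_mul]
end

section
/- Let X be a random variable on [0,1) with E[−log X] = +∞ (in particular if X may have an atom at 0). Then the depth D_n of node n in the SARRT with attachment X satisfies D_n / log n → 0 in probability and E[D_n]/log n → 0 as n → ∞. -/
open MeasureTheory ProbabilityTheory Filter Finset
open scoped ENNReal

/-- The label of the `j`-th ancestor of node `n` in the SARRT. -/
noncomputable def sarrtLabel {Ω : Type*} (X : ℕ → Ω → ℝ) (n : ℕ) : ℕ → Ω → ℕ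
  | 0 => fun _ => n
  | j + 1 => fun ω => ⌊(sarrtLabel X n j ω : ℝ) * X (sarrtLabel X n j ω) ω⌋₊

/-- The depth of node `n` in the SARRT. -/
noncomputable def sarrtDepth {Ω : Type*} (X : ℕ → Ω → ℝ) (n : ℕ) (ω : Ω) : ℕ :=
  sInf {j : ℕ | sarrtLabel X n j ω = 0}

section Labels

variable {Ω : Type*} {X : ℕ → Ω → ℝ}

lemma sarrtLabel_zero (n : ℕ) (ω : Ω) : sarrtLabel X n 0 ω = n := rfl

lemma sarrtLabel_succ (n j : ℕ) (ω : Ω) :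
    sarrtLabel X n (j+1) ω = ⌊(sarrtLabel X n j ω : ℝ) * X (sarrtLabel X n j ω) ω⌋₊ := rfl

lemma sarrtLabel_succ_lt (hrange : ∀ i ω, X i ω ∈ Set.Ico (0 : ℝ) 1) (n j : ℕ) (ω : Ω)
    (h : sarrtLabel X n j ω ≠ 0) : sarrtLabel X n (j+1) ω < sarrtLabel X n j ω := by
  set m := sarrtLabel X n j ω with hm
  rw [sarrtLabel_succ, ← hm]
  have hmpos : 0 < (m : ℝ) := by positivity -- wrong, need m ≥ 1
  exact (Nat.floor_lt (mul_nonneg (Nat.cast_nonneg m) (hrange m ω).1)).2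
    (mul_lt_of_lt_one_right (by exact_mod_cast Nat.pos_of_ne_zero h) (hrange m ω).2)

lemma sarrtLabel_succ_le (hrange : ∀ i ω, X i ω ∈ Set.Ico (0 : ℝ) 1) (n j : ℕ) (ω : Ω) :
    sarrtLabel X n (j+1) ω ≤ sarrtLabel X n j ω := by
  by_cases h : sarrtLabel X n j ω = 0
  · rw [sarrtLabel_succ, h]
    simp
  · exact (sarrtLabel_succ_lt hrange n j ω h).le

lemma sarrtLabel_antitone (hrange : ∀ i ω, X i ω ∈ Set.Ico (0 : ℝ) 1) (n : ℕ) (ω : Ω) :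
    Antitone (fun j => sarrtLabel X n j ω) :=
  antitone_nat_of_succ_le (fun j => sarrtLabel_succ_le hrange n j ω)

lemma sarrtLabel_le (hrange : ∀ i ω, X i ω ∈ Set.Ico (0 : ℝ) 1) (n j : ℕ) (ω : Ω) :
    sarrtLabel X n j ω ≤ n :=
  sarrtLabel_antitone hrange n ω (Nat.zero_le j)

lemma sarrtLabel_shift (n j : ℕ) (ω : Ω) :
    sarrtLabel X n (j+1) ω = sarrtLabel X (sarrtLabel X n 1 ω) j ω := by
  induction j with
  | zero => rfl
  | succ j ih => rw [sarrtLabel_succ, ih, ← sarrtLabel_succ]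

lemma sarrtLabel_eq_zero (hrange : ∀ i ω, X i ω ∈ Set.Ico (0 : ℝ) 1) :
    ∀ j n, n ≤ j → ∀ ω : Ω, sarrtLabel X n j ω = 0 := by
  intro j
  induction j with
  | zero => intro n hn ω; interval_cases n; rfl
  | succ j ih =>
    intro n hn ω
    by_cases h0 : n = 0
    · subst h0
      exact Nat.le_zero.1 ((sarrtLabel_le hrange 0 (j+1) ω))
    · rw [sarrtLabel_shift]
      refine ih _ ?_ ω
      have := sarrtLabel_succ_lt hrange n 0 ω (by simpa [sarrtLabel_zero] using h0)
      rw [sarrtLabel_zero] at this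
      norm_num at this
      omega

lemma sarrtDepth_le (hrange : ∀ i ω, X i ω ∈ Set.Ico (0 : ℝ) 1) (n : ℕ) (ω : Ω) :
    sarrtDepth X n ω ≤ n :=
  Nat.sInf_le (sarrtLabel_eq_zero hrange n n le_rfl ω)

lemma Nat.sInf_shift {S : Set ℕ} (h0 : 0 ∉ S) (hne : S.Nonempty) :
    sInf S = sInf {j | j + 1 ∈ S} + 1 := by
  obtain ⟨t, ht⟩ : ∃ t, sInf S = t + 1 := by
    rcases Nat.exists_eq_add_of_lt (Nat.pos_of_ne_zero (fun h => h0 (h ▸ Nat.sInf_mem hne))) with ⟨t, ht'⟩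
    exact ⟨t, by omega⟩
  have htS : t + 1 ∈ S := ht ▸ Nat.sInf_mem hne
  have h1 : sInf {j | j + 1 ∈ S} ≤ t := Nat.sInf_le htS
  have h2 : sInf {j | j + 1 ∈ S} + 1 ∈ S := Nat.sInf_mem (⟨t, htS⟩ : Set.Nonempty {j | j + 1 ∈ S})
  have h3 := Nat.sInf_le h2
  omega

lemma sarrtDepth_succ (hrange : ∀ i ω, X i ω ∈ Set.Ico (0 : ℝ) 1) {n : ℕ} (hn : n ≠ 0) (ω : Ω) :
    sarrtDepth X n ω = sarrtDepth X (⌊(n : ℝ) * X n ω⌋₊) ω + 1 := by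
  have h1 : sarrtLabel X n 1 ω = ⌊(n : ℝ) * X n ω⌋₊ := rfl
  unfold sarrtDepth
  rw [Nat.sInf_shift (S := {j | sarrtLabel X n j ω = 0}) (by simpa [sarrtLabel_zero] using hn)
    ⟨n, sarrtLabel_eq_zero hrange n n le_rfl ω⟩]
  congr 2
  ext j
  simp only [Set.mem_setOf_eq]
  rw [sarrtLabel_shift, h1]

lemma sarrtDepth_zero' (ω : Ω) : sarrtDepth X 0 ω = 0 :=
  Nat.sInf_eq_zero.2 (Or.inl rfl)

end Labels

section Meas

variable {Ω : Type*} [MeasurableSpace Ω] {X : ℕ → Ω → ℝ}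

lemma measurable_bind' {β : Type*} [MeasurableSpace β] {L : Ω → ℕ} (hL : Measurable L)
    {g : ℕ → Ω → β} (hg : ∀ m, Measurable (g m)) : Measurable (fun ω => g (L ω) ω) := by
  intro s hs
  have : (fun ω => g (L ω) ω) ⁻¹' s = ⋃ m, L ⁻¹' {m} ∩ (g m) ⁻¹' s := by
    ext ω
    simp only [Set.mem_preimage, Set.mem_iUnion, Set.mem_inter_iff, Set.mem_singleton_iff]
    exact ⟨fun h => ⟨L ω, rfl, h⟩, fun ⟨m, hm, h⟩ => by rw [hm]; exact h⟩
  rw [this]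
  exact MeasurableSet.iUnion fun m => ((hL (measurableSet_singleton m)).inter (hg m hs))

lemma measurable_sarrtLabel (hmeas : ∀ i, Measurable (X i)) (n j : ℕ) :
    Measurable (sarrtLabel X n j) := by
  induction j with
  | zero => exact measurable_const
  | succ j ih =>
    have : Measurable (fun ω => (sarrtLabel X n j ω : ℝ) * X (sarrtLabel X n j ω) ω) :=
      measurable_bind' ih (fun m => measurable_const.mul (hmeas m))
    exact Nat.measurable_floor.comp this

lemma measurable_sarrtDepth (hmeas : ∀ i, Measurable (X i)) (n : ℕ) :
    Measurable (sarrtDepth X n) := by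
  apply measurable_to_countable'
  intro k
  match k with
  | 0 =>
    have : sarrtDepth X n ⁻¹' {0} =
        (sarrtLabel X n 0) ⁻¹' {0} ∪ ⋂ j, {ω | sarrtLabel X n j ω ≠ 0} := by
      ext ω
      simp only [Set.mem_preimage, Set.mem_singleton_iff, Set.mem_union, Set.mem_iInter,
        Set.mem_setOf_eq, sarrtDepth, Nat.sInf_eq_zero]
      constructor
      · rintro (h | h)
        · exact Or.inl h
        · exact Or.inr (fun j => by
            intro hj
            exact absurd (Set.eq_empty_iff_forall_notMem.1 h j) (fun h' => h' hj))
      · rintro (h | h)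
        · exact Or.inl h
        · exact Or.inr (Set.eq_empty_iff_forall_notMem.2 fun j hj => h j hj)
    rw [this]
    exact ((measurable_sarrtLabel hmeas n 0) (measurableSet_singleton 0)).union
      (MeasurableSet.iInter fun j =>
        ((measurable_sarrtLabel hmeas n j) (measurableSet_singleton 0)).compl)
  | (k+1) =>
    have : sarrtDepth X n ⁻¹' {k+1} =
        {ω | sarrtLabel X n (k+1) ω = 0} ∩ ⋂ j ∈ Finset.range (k+1), {ω | sarrtLabel X n j ω ≠ 0} := by
      ext ω
      simp only [Set.mem_preimage, Set.mem_singleton_iff, Set.mem_inter_iff, Set.mem_iInter,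
        Set.mem_setOf_eq, Finset.mem_range]
      constructor
      · intro h
        have hne : {j | sarrtLabel X n j ω = 0}.Nonempty := by
          by_contra hemp
          rw [Set.not_nonempty_iff_eq_empty] at hemp
          rw [sarrtDepth, hemp, Nat.sInf_empty] at h
          omega
        have hmem := Nat.sInf_mem hne
        rw [sarrtDepth] at h
        rw [h] at hmem
        refine ⟨hmem, fun j hj => Nat.notMem_of_lt_sInf (s := {j | sarrtLabel X n j ω = 0}) (by omega : j < sInf {j | sarrtLabel X n j ω = 0})⟩
      · rintro ⟨h1, h2⟩
        have hle : sarrtDepth X n ω ≤ k + 1 := Nat.sInf_le h1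
        have hge : ¬ (sarrtDepth X n ω < k + 1) := by
          intro hlt
          have := Nat.sInf_mem (⟨k+1, h1⟩ : Set.Nonempty {j | sarrtLabel X n j ω = 0})
          exact h2 _ hlt this
        omega
    rw [this]
    refine ((measurable_sarrtLabel hmeas n (k+1)) (measurableSet_singleton 0)).inter ?_
    exact MeasurableSet.biInter (Set.to_countable _) fun j _ =>
      ((measurable_sarrtLabel hmeas n j) (measurableSet_singleton 0)).compl

end Meas

section Transfer

variable {Ω : Type*} {X : ℕ → Ω → ℝ}

/-- evaluation family on sequence space -/
def seqEval : ℕ → (ℕ → ℝ) → ℝ := fun i x => x i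

lemma sarrtLabel_transfer (n j : ℕ) (ω : Ω) :
    sarrtLabel X n j ω = sarrtLabel seqEval n j (fun i => X i ω) := by
  induction j with
  | zero => rfl
  | succ j ih => rw [sarrtLabel_succ, sarrtLabel_succ, ih]; rfl

lemma sarrtDepth_transfer (n : ℕ) (ω : Ω) :
    sarrtDepth X n ω = sarrtDepth seqEval n (fun i => X i ω) := by
  unfold sarrtDepth
  congr 1
  ext j
  rw [Set.mem_setOf_eq, Set.mem_setOf_eq, sarrtLabel_transfer]

lemma sarrtLabel_congr {x y : ℕ → ℝ} {m : ℕ}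
    (hb : ∀ i ≤ m, x i ∈ Set.Ico (0:ℝ) 1) (hxy : ∀ i ≤ m, x i = y i) :
    ∀ j, sarrtLabel seqEval m j x = sarrtLabel seqEval m j y ∧ sarrtLabel seqEval m j x ≤ m := by
  intro j
  induction j with
  | zero => exact ⟨rfl, le_rfl⟩
  | succ j ih =>
    obtain ⟨heq, hle⟩ := ih
    constructor
    · rw [sarrtLabel_succ, sarrtLabel_succ, ← heq, ]
      show ⌊_ * x _⌋₊ = ⌊_ * y _⌋₊
      rw [hxy _ hle]
    · rw [sarrtLabel_succ]
      show ⌊(sarrtLabel seqEval m j x : ℝ) * x (sarrtLabel seqEval m j x)⌋₊ ≤ m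
      set L := sarrtLabel seqEval m j x
      calc ⌊(L : ℝ) * x L⌋₊ ≤ ⌊(L : ℝ)⌋₊ := by
            apply Nat.floor_le_floor
            calc (L : ℝ) * x L ≤ (L : ℝ) * 1 := by
                  apply mul_le_mul_of_nonneg_left (hb L hle).2.le (Nat.cast_nonneg L)
              _ = L := mul_one _
        _ = L := Nat.floor_natCast L
        _ ≤ m := hle

lemma sarrtDepth_congr {x y : ℕ → ℝ} {m : ℕ}
    (hb : ∀ i ≤ m, x i ∈ Set.Ico (0:ℝ) 1) (hxy : ∀ i ≤ m, x i = y i) :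
    sarrtDepth seqEval m x = sarrtDepth seqEval m y := by
  unfold sarrtDepth
  congr 1
  ext j
  rw [Set.mem_setOf_eq, Set.mem_setOf_eq, (sarrtLabel_congr hb hxy j).1]

end Transfer

section Helpers

lemma integrable_of_bounded' {Ω : Type*} [MeasurableSpace Ω] {P : MeasureTheory.Measure Ω}
    [MeasureTheory.IsFiniteMeasure P] {f : Ω → ℝ} (hf : Measurable f) (C : ℝ)
    (h : ∀ ω, |f ω| ≤ C) : MeasureTheory.Integrable f P :=
  (MeasureTheory.integrable_const C).mono' hf.aestronglyMeasurable
    (Filter.Eventually.of_forall (fun ω => by simpa using h ω))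

lemma real_rpow_add_le {a b p : ℝ} (ha : 0 ≤ a) (hb : 0 ≤ b) (hp : 0 ≤ p) (hp1 : p ≤ 1) :
    (a + b) ^ p ≤ a ^ p + b ^ p := by
  have h := NNReal.rpow_add_le_add_rpow a.toNNReal b.toNNReal hp hp1
  have h2 := NNReal.coe_le_coe.2 h
  push_cast at h2
  rwa [Real.coe_toNNReal _ ha, Real.coe_toNNReal _ hb] at h2

end Helpers

section Key

variable {Ω : Type*} [MeasurableSpace Ω] (P : MeasureTheory.Measure Ω)
  [MeasureTheory.IsProbabilityMeasure P] (X : ℕ → Ω → ℝ)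

open MeasureTheory ProbabilityTheory Finset

lemma integrable_spow (hmeas : ∀ i, Measurable (X i))
    (hrange : ∀ i ω, X i ω ∈ Set.Ico (0 : ℝ) 1) {s : ℝ} (hs : 1 ≤ s) (m : ℕ) :
    Integrable (fun ω => s ^ sarrtDepth X m ω) P := by
  have hmb : Measurable (fun ω => s ^ sarrtDepth X m ω) :=
    measurable_bind' (measurable_sarrtDepth hmeas m) (fun k => measurable_const (a := s ^ k))
  refine integrable_of_bounded' hmb (s ^ m) (fun ω => ?_)
  rw [abs_of_nonneg (pow_nonneg (by linarith) _)]
  exact pow_le_pow_right₀ hs (sarrtDepth_le hrange m ω)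

lemma sarrt_key (hmeas : ∀ i, Measurable (X i))
    (hrange : ∀ i ω, X i ω ∈ Set.Ico (0 : ℝ) 1)
    (hindep : iIndepFun X P)
    (hident : ∀ i, ProbabilityTheory.IdentDistrib (X i) (X 0) P P)
    {γ s : ℝ} (hγ0 : 0 < γ) (hγ1 : γ ≤ 1) (hs : 1 < s)
    (hθ : s * ∫ ω, (X 0 ω) ^ γ ∂P < 1) :
    ∃ C : ℝ, 1 ≤ C ∧ ∀ n : ℕ, ∫ ω, s ^ sarrtDepth X n ω ∂P ≤ C * ((n : ℝ) + 1) ^ γ := by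
  set I := ∫ ω, (X 0 ω) ^ γ ∂P with hI
  have hs0 : (0:ℝ) < s := by linarith
  have hI0 : 0 ≤ I := integral_nonneg (fun ω => Real.rpow_nonneg (hrange 0 ω).1 γ)
  set θ := s * I with hθdef
  have hθ0 : 0 ≤ θ := mul_nonneg hs0.le hI0
  have hθ1 : θ < 1 := hθ
  -- choose N₀
  set R : ℝ := s / (1 - θ) with hR
  have hRpos : 0 < R := div_pos hs0 (by linarith)
  set N₀ : ℕ := ⌈R ^ γ⁻¹⌉₊ + 1 with hN₀
  have hN₀R : R ≤ (N₀ : ℝ) ^ γ := by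
    have h1 : R ^ γ⁻¹ ≤ (N₀ : ℝ) := by
      calc R ^ γ⁻¹ ≤ (⌈R ^ γ⁻¹⌉₊ : ℝ) := Nat.le_ceil _
        _ ≤ (N₀ : ℝ) := by exact_mod_cast Nat.le_succ _
    calc R = (R ^ γ⁻¹) ^ γ := by
          rw [← Real.rpow_mul hRpos.le, inv_mul_cancel₀ hγ0.ne', Real.rpow_one]
      _ ≤ ((N₀ : ℝ)) ^ γ := Real.rpow_le_rpow (Real.rpow_nonneg hRpos.le _) h1 hγ0.le
  set C : ℝ := s ^ N₀ with hC
  have hC1 : 1 ≤ C := one_le_pow₀ hs.le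
  refine ⟨C, hC1, fun n => ?_⟩
  induction n using Nat.strong_induction_on with
  | _ n IH =>
  have hone_le : (1:ℝ) ≤ ((n:ℝ) + 1) ^ γ :=
    Real.one_le_rpow (by exact_mod_cast Nat.le_add_left 1 n) hγ0.le
  by_cases hn : n < N₀
  · -- base case: crude bound
    have hb : ∫ ω, s ^ sarrtDepth X n ω ∂P ≤ s ^ n := by
      have : ∀ ω, s ^ sarrtDepth X n ω ≤ s ^ n :=
        fun ω => pow_le_pow_right₀ hs.le (sarrtDepth_le hrange n ω)
      calc ∫ ω, s ^ sarrtDepth X n ω ∂P ≤ ∫ _ω, s ^ n ∂P :=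
            integral_mono (integrable_spow P X hmeas hrange hs.le n) (integrable_const _)
              this
        _ = s ^ n := by simp
    calc ∫ ω, s ^ sarrtDepth X n ω ∂P ≤ s ^ n := hb
      _ ≤ s ^ N₀ := pow_le_pow_right₀ hs.le hn.le
      _ = C * 1 := (mul_one C).symm
      _ ≤ C * ((n:ℝ)+1) ^ γ := by
          exact mul_le_mul_of_nonneg_left hone_le (by linarith)
  · push_neg at hn
    have hn1 : 1 ≤ n := le_trans (Nat.one_le_iff_ne_zero.2 (by simp [hN₀])) hn
    have hn0 : n ≠ 0 := by omega
    have hnR : (0:ℝ) < n := by exact_mod_cast hn1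
    set Lf : Ω → ℕ := fun ω => ⌊(n : ℝ) * X n ω⌋₊ with hLf
    have hLf_lt : ∀ ω, Lf ω < n := fun ω =>
      (Nat.floor_lt (mul_nonneg hnR.le (hrange n ω).1)).2
        (mul_lt_of_lt_one_right hnR (hrange n ω).2)
    have hLf_meas : Measurable Lf :=
      Nat.measurable_floor.comp (measurable_const.mul (hmeas n))
    -- pointwise decomposition
    have step0 : ∀ ω, s ^ sarrtDepth X n ω =
        s * ∑ m ∈ range n, (if Lf ω = m then (1:ℝ) else 0) * s ^ sarrtDepth X m ω := by
      intro ω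
      rw [sarrtDepth_succ hrange hn0 ω]
      have : ∑ m ∈ range n, (if Lf ω = m then (1:ℝ) else 0) * s ^ sarrtDepth X m ω
          = s ^ sarrtDepth X (Lf ω) ω := by
        rw [Finset.sum_congr rfl (fun m _ => ite_mul (Lf ω = m) (1:ℝ) 0 _)]
        simp only [one_mul, zero_mul]
        rw [Finset.sum_ite_eq (range n) (Lf ω) (fun m => s ^ sarrtDepth X m ω)]
        rw [if_pos (Finset.mem_range.2 (hLf_lt ω))]
      rw [this, pow_succ]
      ring
    -- integrability of pieces
    have hmeas_ind : ∀ m : ℕ, Measurable (fun ω => (if Lf ω = m then (1:ℝ) else 0)) := by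
      intro m
      have : MeasurableSet {ω | Lf ω = m} := hLf_meas (measurableSet_singleton m)
      exact Measurable.ite this measurable_const measurable_const
    have hint_piece : ∀ m : ℕ, Integrable
        (fun ω => (if Lf ω = m then (1:ℝ) else 0) * s ^ sarrtDepth X m ω) P := by
      intro m
      refine integrable_of_bounded' ((hmeas_ind m).mul
        (measurable_bind' (measurable_sarrtDepth hmeas m) (fun k => measurable_const (a := s ^ k))))
        (s ^ m) (fun ω => ?_)
      rw [abs_mul]
      by_cases h : Lf ω = m
      · rw [if_pos h, abs_one, one_mul, abs_of_nonneg (pow_nonneg hs0.le _)]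
        exact pow_le_pow_right₀ hs.le (sarrtDepth_le hrange m ω)
      · rw [if_neg h, abs_zero, zero_mul]
        exact pow_nonneg hs0.le m
    -- integral as a sum
    have hsplit : ∫ ω, s ^ sarrtDepth X n ω ∂P =
        s * ∑ m ∈ range n,
          ∫ ω, (if Lf ω = m then (1:ℝ) else 0) * s ^ sarrtDepth X m ω ∂P := by
      rw [integral_congr_ae (Filter.Eventually.of_forall step0)]
      rw [integral_const_mul]
      congr 1
      exact integral_finset_sum (range n) (fun m _ => hint_piece m)
    -- independence step
    have hterm : ∀ m ∈ range n,
        ∫ ω, (if Lf ω = m then (1:ℝ) else 0) * s ^ sarrtDepth X m ω ∂P =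
        (∫ ω, (if Lf ω = m then (1:ℝ) else 0) ∂P) * ∫ ω, s ^ sarrtDepth X m ω ∂P := by
      intro m hm
      have hmn : m < n := Finset.mem_range.1 hm
      set S₁ : Finset ℕ := {n} with hS₁
      set T₁ : Finset ℕ := range n with hT₁
      have hdisj : Disjoint S₁ T₁ := by
        simp [hS₁, hT₁, Finset.disjoint_left]
      have hbase := hindep.indepFun_finset S₁ T₁ hdisj hmeas
      have hnS : n ∈ S₁ := Finset.mem_singleton_self n
      set φ : (S₁ → ℝ) → ℝ :=
        fun v => if ⌊(n : ℝ) * v ⟨n, hnS⟩⌋₊ = m then (1:ℝ) else 0 with hφ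
      set ψ : (T₁ → ℝ) → ℝ :=
        fun v => s ^ sarrtDepth seqEval m
          (fun i => if h : i ∈ T₁ then v ⟨i, h⟩ else 0) with hψ
      have hφm : Measurable φ := by
        have h1 : Measurable (fun v : (S₁ → ℝ) =>
            ⌊(n : ℝ) * v ⟨n, hnS⟩⌋₊) :=
          Nat.measurable_floor.comp (measurable_const.mul (measurable_pi_apply _))
        exact Measurable.ite (h1 (measurableSet_singleton m)) measurable_const measurable_const
      have hψm : Measurable ψ := by
        have hext : Measurable (fun v : (T₁ → ℝ) =>
            (fun i => if h : i ∈ T₁ then v ⟨i, h⟩ else 0 : ℕ → ℝ)) := by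
          apply measurable_pi_lambda
          intro i
          by_cases h : i ∈ T₁
          · simp only [h, dif_pos]
            exact measurable_pi_apply _
          · simp only [h, dif_neg, not_false_iff]
            exact measurable_const
        have hd : Measurable (fun v : (T₁ → ℝ) =>
            sarrtDepth seqEval m (fun i => if h : i ∈ T₁ then v ⟨i, h⟩ else 0)) :=
          (measurable_sarrtDepth (fun i => measurable_pi_apply i) m).comp hext
        exact measurable_bind' hd (fun k => measurable_const (a := s ^ k))
      have hIndep : IndepFun (φ ∘ (fun a (i : S₁) => X i a))
          (ψ ∘ (fun a (i : T₁) => X i a)) P :=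
        hbase.comp hφm hψm
      have hFeq : (φ ∘ (fun a (i : S₁) => X i a)) =
          (fun ω => (if Lf ω = m then (1:ℝ) else 0)) := rfl
      have hGeq : (ψ ∘ (fun a (i : T₁) => X i a)) =
          (fun ω => s ^ sarrtDepth X m ω) := by
        funext ω
        show s ^ sarrtDepth seqEval m
            (fun i => if h : i ∈ T₁ then X i ω else 0) = s ^ sarrtDepth X m ω
        rw [sarrtDepth_transfer (X := X) m ω]
        congr 1
        refine (sarrtDepth_congr (fun i _ => hrange i ω) (fun i hi => ?_)).symm
        have hiT : i ∈ T₁ := Finset.mem_range.2 (lt_of_le_of_lt hi hmn)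
        simp [hiT]
      rw [hFeq, hGeq] at hIndep
      exact IndepFun.integral_fun_mul_eq_mul_integral (μ := P)
        (X := fun ω => (if Lf ω = m then (1:ℝ) else 0)) (Y := fun ω => s ^ sarrtDepth X m ω) hIndep
        (integrable_of_bounded' (hmeas_ind m) 1 (fun ω => by
          by_cases h : Lf ω = m <;> simp [h])).aestronglyMeasurable
        (integrable_spow P X hmeas hrange hs.le m).aestronglyMeasurable
    -- probabilities
    set p : ℕ → ℝ := fun m => ∫ ω, (if Lf ω = m then (1:ℝ) else 0) ∂P with hp
    have hp0 : ∀ m, 0 ≤ p m := fun m => integral_nonneg (fun ω => by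
      by_cases h : Lf ω = m <;> simp [hp, h])
    -- apply IH
    have hIHsum : ∑ m ∈ range n, p m * ∫ ω, s ^ sarrtDepth X m ω ∂P ≤
        C * ∑ m ∈ range n, p m * ((m : ℝ) + 1) ^ γ := by
      rw [Finset.mul_sum]
      apply Finset.sum_le_sum
      intro m hm
      have h1 := IH m (Finset.mem_range.1 hm)
      calc p m * ∫ ω, s ^ sarrtDepth X m ω ∂P ≤ p m * (C * ((m : ℝ) + 1) ^ γ) :=
            mul_le_mul_of_nonneg_left h1 (hp0 m)
        _ = C * (p m * ((m : ℝ) + 1) ^ γ) := by ring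
    -- identify the sum with an integral
    have hint_floor : Integrable (fun ω => ((Lf ω : ℝ) + 1) ^ γ) P := by
      refine integrable_of_bounded' ?_ (((n : ℝ) + 1) ^ γ) (fun ω => ?_)
      · have : Measurable (fun ω => ((Lf ω : ℝ) + 1)) :=
          (measurable_bind' hLf_meas (fun k => measurable_const (a := ((k : ℝ) + 1)))).mono
            le_rfl le_rfl
        exact (Real.continuous_rpow_const hγ0.le).measurable.comp this
      · rw [abs_of_nonneg (Real.rpow_nonneg (by positivity) _)]
        apply Real.rpow_le_rpow (by positivity) _ hγ0.le
        have := (hLf_lt ω).le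
        have : (Lf ω : ℝ) ≤ n := by exact_mod_cast this
        linarith
    have hsum_eq : ∑ m ∈ range n, p m * ((m : ℝ) + 1) ^ γ =
        ∫ ω, ((Lf ω : ℝ) + 1) ^ γ ∂P := by
      have hptwise : ∀ ω, ((Lf ω : ℝ) + 1) ^ γ =
          ∑ m ∈ range n, (if Lf ω = m then (1:ℝ) else 0) * ((m : ℝ) + 1) ^ γ := by
        intro ω
        rw [Finset.sum_congr rfl (fun m _ => ite_mul (Lf ω = m) (1:ℝ) 0 _)]
        simp only [one_mul, zero_mul]
        rw [Finset.sum_ite_eq (range n) (Lf ω) (fun m => ((m : ℝ) + 1) ^ γ)]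
        rw [if_pos (Finset.mem_range.2 (hLf_lt ω))]
      rw [integral_congr_ae (Filter.Eventually.of_forall hptwise)]
      rw [integral_finset_sum (range n) (fun m _ => by
        refine integrable_of_bounded' ((hmeas_ind m).mul measurable_const)
          (((m:ℝ)+1) ^ γ) (fun ω => ?_)
        rw [abs_mul, abs_of_nonneg (Real.rpow_nonneg (by positivity) _)]
        by_cases h : Lf ω = m <;> simp [h, Real.rpow_nonneg (show (0:ℝ) ≤ (m:ℝ)+1 by positivity) γ])]
      exact Finset.sum_congr rfl (fun m _ => by rw [integral_mul_const])
    -- bound the integral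
    have hIdent : ∫ ω, (X n ω) ^ γ ∂P = I := by
      have := (hident n).comp (u := fun t : ℝ => t ^ γ) (Real.continuous_rpow_const hγ0.le).measurable
      exact this.integral_eq
    have hbound2 : ∫ ω, ((Lf ω : ℝ) + 1) ^ γ ∂P ≤ (n : ℝ) ^ γ * I + 1 := by
      have hpt : ∀ ω, ((Lf ω : ℝ) + 1) ^ γ ≤ (n : ℝ) ^ γ * (X n ω) ^ γ + 1 := by
        intro ω
        have ha : (0:ℝ) ≤ (n : ℝ) * X n ω := mul_nonneg hnR.le (hrange n ω).1
        have h1 : (Lf ω : ℝ) ≤ (n : ℝ) * X n ω := Nat.floor_le ha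
        calc ((Lf ω : ℝ) + 1) ^ γ ≤ ((n : ℝ) * X n ω + 1) ^ γ :=
              Real.rpow_le_rpow (by positivity) (by linarith) hγ0.le
          _ ≤ ((n : ℝ) * X n ω) ^ γ + 1 ^ γ := real_rpow_add_le ha zero_le_one hγ0.le hγ1
          _ = (n : ℝ) ^ γ * (X n ω) ^ γ + 1 := by
              rw [Real.mul_rpow hnR.le (hrange n ω).1, Real.one_rpow]
      have hintX : Integrable (fun ω => (n : ℝ) ^ γ * (X n ω) ^ γ + 1) P := by
        refine Integrable.add ?_ (integrable_const 1)
        refine Integrable.const_mul ?_ _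
        refine integrable_of_bounded' ((Real.continuous_rpow_const hγ0.le).measurable.comp (hmeas n)) 1 (fun ω => ?_)
        rw [abs_of_nonneg (Real.rpow_nonneg (hrange n ω).1 _)]
        exact Real.rpow_le_one (hrange n ω).1 (hrange n ω).2.le hγ0.le
      calc ∫ ω, ((Lf ω : ℝ) + 1) ^ γ ∂P ≤ ∫ ω, ((n : ℝ) ^ γ * (X n ω) ^ γ + 1) ∂P :=
            integral_mono hint_floor hintX hpt
        _ = (n : ℝ) ^ γ * ∫ ω, (X n ω) ^ γ ∂P + 1 := by
            rw [integral_add _ (integrable_const 1), integral_const_mul]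
            · simp
            · refine Integrable.const_mul ?_ _
              refine integrable_of_bounded' ((Real.continuous_rpow_const hγ0.le).measurable.comp (hmeas n)) 1 (fun ω => ?_)
              rw [abs_of_nonneg (Real.rpow_nonneg (hrange n ω).1 _)]
              exact Real.rpow_le_one (hrange n ω).1 (hrange n ω).2.le hγ0.le
        _ = (n : ℝ) ^ γ * I + 1 := by rw [hIdent]
    -- final computation
    have hfinal : s * (C * ((n : ℝ) ^ γ * I + 1)) ≤ C * ((n : ℝ) + 1) ^ γ := by
      have h1 : θ * (n : ℝ) ^ γ + s ≤ (n : ℝ) ^ γ := by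
        have hnN : (N₀ : ℝ) ^ γ ≤ (n : ℝ) ^ γ :=
          Real.rpow_le_rpow (Nat.cast_nonneg _) (by exact_mod_cast hn) hγ0.le
        have h2 : s ≤ (n : ℝ) ^ γ * (1 - θ) := by
          rw [hR] at hN₀R
          have := le_trans hN₀R hnN
          calc s = (s / (1 - θ)) * (1 - θ) :=
                (div_mul_cancel₀ s (by linarith : (1:ℝ) - θ ≠ 0)).symm
            _ ≤ (n : ℝ) ^ γ * (1 - θ) :=
              mul_le_mul_of_nonneg_right this (by linarith)
        nlinarith
      have h3 : (n : ℝ) ^ γ ≤ ((n : ℝ) + 1) ^ γ :=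
        Real.rpow_le_rpow (Nat.cast_nonneg _) (by linarith) hγ0.le
      calc s * (C * ((n : ℝ) ^ γ * I + 1)) = C * (θ * (n : ℝ) ^ γ + s) := by
            rw [hθdef]; ring
        _ ≤ C * (n : ℝ) ^ γ := mul_le_mul_of_nonneg_left h1 (by linarith)
        _ ≤ C * ((n : ℝ) + 1) ^ γ := mul_le_mul_of_nonneg_left h3 (by linarith)
    -- put everything together
    calc ∫ ω, s ^ sarrtDepth X n ω ∂P
        = s * ∑ m ∈ range n, ∫ ω, (if Lf ω = m then (1:ℝ) else 0) * s ^ sarrtDepth X m ω ∂P := hsplit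
      _ = s * ∑ m ∈ range n, p m * ∫ ω, s ^ sarrtDepth X m ω ∂P := by
          rw [Finset.sum_congr rfl hterm]
      _ ≤ s * (C * ∑ m ∈ range n, p m * ((m : ℝ) + 1) ^ γ) :=
          mul_le_mul_of_nonneg_left hIHsum hs0.le
      _ = s * (C * ∫ ω, ((Lf ω : ℝ) + 1) ^ γ ∂P) := by rw [hsum_eq]
      _ ≤ s * (C * ((n : ℝ) ^ γ * I + 1)) := by
          apply mul_le_mul_of_nonneg_left _ hs0.le
          exact mul_le_mul_of_nonneg_left hbound2 (by linarith)
      _ ≤ C * ((n : ℝ) + 1) ^ γ := hfinal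

end Key

section Gamma

open MeasureTheory Filter

lemma exists_good_gamma {Ω : Type*} [MeasurableSpace Ω] (P : Measure Ω)
    [IsProbabilityMeasure P] (X0 : Ω → ℝ) (hmeas0 : Measurable X0)
    (hrange0 : ∀ ω, X0 ω ∈ Set.Ico (0 : ℝ) 1)
    (hmean : ∫⁻ ω, ENNReal.ofReal (- Real.log (X0 ω)) ∂P = ⊤)
    (c δ : ℝ) (hc : 0 ≤ c) (hδ : 0 < δ) :
    ∃ γ : ℝ, 0 < γ ∧ γ ≤ 1 ∧ γ < δ ∧ ∫ ω, X0 ω ^ γ ∂P < 1 - c * γ := by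
  set g : ℕ → Ω → ℝ≥0∞ :=
    fun k ω => ENNReal.ofReal ((k : ℝ) * (1 - X0 ω ^ (k : ℝ)⁻¹)) with hg
  have hXγ_mem : ∀ (γ : ℝ) (ω : Ω), 0 ≤ γ → X0 ω ^ γ ≤ 1 := fun γ ω h =>
    Real.rpow_le_one (hrange0 ω).1 (hrange0 ω).2.le h
  have hgm : ∀ k, Measurable (g k) := by
    intro k
    apply ENNReal.measurable_ofReal.comp
    exact measurable_const.mul (measurable_const.sub
      ((Real.continuous_rpow_const (by positivity)).measurable.comp hmeas0))
  -- pointwise liminf bound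
  have hlb : ∀ ω, ENNReal.ofReal (- Real.log (X0 ω)) ≤ atTop.liminf (fun k => g k ω) := by
    intro ω
    rcases eq_or_lt_of_le (hrange0 ω).1 with h0 | h0
    · -- X0 ω = 0
      rw [← h0, Real.log_zero, neg_zero, ENNReal.ofReal_zero]
      exact zero_le
    · -- 0 < X0 ω
      set x := X0 ω with hx
      have hx1 : x < 1 := (hrange0 ω).2
      -- derivative fact
      have hderiv : HasDerivAt (fun γ : ℝ => x ^ γ) (Real.log x) 0 := by
        have h1 : HasDerivAt (fun γ : ℝ => Real.log x * γ) (Real.log x) 0 := by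
          simpa using (hasDerivAt_id (0:ℝ)).const_mul (Real.log x)
        have h2 := h1.exp
        simp only [mul_zero, Real.exp_zero, mul_one, one_mul] at h2
        have heq : (fun γ : ℝ => Real.exp (Real.log x * γ)) = fun γ : ℝ => x ^ γ := by
          funext γ
          rw [Real.rpow_def_of_pos h0]
        rwa [heq] at h2
      have hslope := hasDerivAt_iff_tendsto_slope.1 hderiv
      have hinvt : Tendsto (fun k : ℕ => (k : ℝ)⁻¹) atTop (nhdsWithin 0 {y | y ≠ 0}) := by
        apply tendsto_nhdsWithin_of_tendsto_nhds_of_eventually_within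
        · exact tendsto_inv_atTop_nhds_zero_nat
        · filter_upwards [eventually_ge_atTop 1] with k hk
          exact inv_ne_zero (by exact_mod_cast Nat.one_le_iff_ne_zero.1 hk)
      have hcomp := (hslope.comp hinvt).neg
      have hreal : Tendsto (fun k : ℕ => (k : ℝ) * (1 - x ^ (k : ℝ)⁻¹)) atTop
          (nhds (- Real.log x)) := by
        apply hcomp.congr'
        filter_upwards [eventually_ge_atTop 1] with k hk
        have hk0 : (k : ℝ) ≠ 0 := by exact_mod_cast Nat.one_le_iff_ne_zero.1 hk
        show -(slope (fun γ : ℝ => x ^ γ) 0 ((k:ℝ)⁻¹)) = _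
        rw [slope_def_field, Real.rpow_zero, sub_zero, div_eq_mul_inv, inv_inv]
        ring
      have htendE : Tendsto (fun k => g k ω) atTop (nhds (ENNReal.ofReal (- Real.log x))) :=
        (ENNReal.continuous_ofReal.tendsto _).comp hreal
      rw [htendE.liminf_eq]
  -- Fatou
  have hfatou : (⊤ : ℝ≥0∞) ≤ atTop.liminf (fun k => ∫⁻ ω, g k ω ∂P) := by
    calc (⊤ : ℝ≥0∞) = ∫⁻ ω, ENNReal.ofReal (- Real.log (X0 ω)) ∂P := hmean.symm
      _ ≤ ∫⁻ ω, atTop.liminf (fun k => g k ω) ∂P := lintegral_mono hlb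
      _ ≤ atTop.liminf (fun k => ∫⁻ ω, g k ω ∂P) := lintegral_liminf_le hgm
  have hev : ∀ᶠ k : ℕ in atTop, ENNReal.ofReal c < ∫⁻ ω, g k ω ∂P :=
    Filter.eventually_lt_of_lt_liminf (lt_of_lt_of_le ENNReal.ofReal_lt_top hfatou)
      Filter.isBounded_ge_of_bot
  obtain ⟨k, hk1, hk2⟩ := (hev.and (eventually_ge_atTop (max 1 (⌈δ⁻¹⌉₊ + 1)))).exists
  have hk_ge1 : 1 ≤ k := le_trans (le_max_left _ _) hk2
  have hkR : (0:ℝ) < k := by exact_mod_cast hk_ge1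
  set γ : ℝ := (k : ℝ)⁻¹ with hγ
  have hγ0 : 0 < γ := by positivity
  have hγ1 : γ ≤ 1 := by
    rw [hγ]
    rw [inv_le_one_iff₀]
    right
    exact_mod_cast hk_ge1
  have hγδ : γ < δ := by
    have hkδ : ⌈δ⁻¹⌉₊ + 1 ≤ k := le_trans (le_max_right _ _) hk2
    have h1 : δ⁻¹ < (k : ℝ) := by
      calc δ⁻¹ ≤ (⌈δ⁻¹⌉₊ : ℝ) := Nat.le_ceil _
        _ < (k : ℝ) := by exact_mod_cast hkδ
    exact inv_lt_of_inv_lt₀ hδ h1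
  -- convert the lintegral bound to a real bound
  have hint : Integrable (fun ω => (k : ℝ) * (1 - X0 ω ^ γ)) P := by
    refine integrable_of_bounded' (measurable_const.mul (measurable_const.sub
      ((Real.continuous_rpow_const hγ0.le).measurable.comp hmeas0))) k (fun ω => ?_)
    rw [abs_mul, abs_of_nonneg (by positivity : (0:ℝ) ≤ (k:ℝ))]
    have h1 : 0 ≤ 1 - X0 ω ^ γ := by linarith [hXγ_mem γ ω hγ0.le]
    have h2 : 1 - X0 ω ^ γ ≤ 1 := by
      have := Real.rpow_nonneg (hrange0 ω).1 γ
      linarith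
    rw [abs_of_nonneg h1]
    nlinarith
  have hnn : 0 ≤ᵐ[P] (fun ω => (k : ℝ) * (1 - X0 ω ^ γ)) := by
    apply Filter.Eventually.of_forall
    intro ω
    have := hXγ_mem γ ω hγ0.le
    have : (0:ℝ) ≤ 1 - X0 ω ^ γ := by linarith
    positivity
  have hA : ENNReal.ofReal c < ENNReal.ofReal (∫ ω, (k : ℝ) * (1 - X0 ω ^ γ) ∂P) := by
    rw [MeasureTheory.ofReal_integral_eq_lintegral_ofReal hint hnn]
    exact hk1
  have hAc : c < ∫ ω, (k : ℝ) * (1 - X0 ω ^ γ) ∂P :=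
    (ENNReal.ofReal_lt_ofReal_iff_of_nonneg hc).1 hA
  have hIint : Integrable (fun ω => X0 ω ^ γ) P := by
    refine integrable_of_bounded'
      ((Real.continuous_rpow_const hγ0.le).measurable.comp hmeas0) 1 (fun ω => ?_)
    rw [abs_of_nonneg (Real.rpow_nonneg (hrange0 ω).1 _)]
    exact hXγ_mem γ ω hγ0.le
  have hcalc : ∫ ω, (k : ℝ) * (1 - X0 ω ^ γ) ∂P
      = (k : ℝ) * (1 - ∫ ω, X0 ω ^ γ ∂P) := by
    rw [integral_const_mul, integral_sub (integrable_const 1) hIint]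
    simp
  rw [hcalc] at hAc
  refine ⟨γ, hγ0, hγ1, hγδ, ?_⟩
  have hγk : γ * (k : ℝ) = 1 := inv_mul_cancel₀ hkR.ne'
  nlinarith [hγ0]

end Gamma

/-- If `E[-log X] = +∞`, then the depth of node `n` in the SARRT with attachment `X`
satisfies `D n / log n → 0` in probability and `E[D n] / log n → 0`. -/
theorem sarrt_depth_infinite_mean
    {Ω : Type*} [MeasurableSpace Ω] (P : Measure Ω) [IsProbabilityMeasure P]
    (X : ℕ → Ω → ℝ)
    (hmeas : ∀ i, Measurable (X i))
    (hrange : ∀ i ω, X i ω ∈ Set.Ico (0 : ℝ) 1)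
    (hindep : iIndepFun X P)
    (hident : ∀ i, IdentDistrib (X i) (X 0) P P)
    (hmean : ∫⁻ ω, ENNReal.ofReal (- Real.log (X 0 ω)) ∂P = ⊤) :
    (∀ ε > 0, Tendsto
      (fun n : ℕ => P {ω | ε < (sarrtDepth X n ω : ℝ) / Real.log n})
      atTop (nhds 0)) ∧
    Tendsto (fun n : ℕ => (∫ ω, (sarrtDepth X n ω : ℝ) ∂P) / Real.log n)
      atTop (nhds 0) := by
  -- the key estimate, for every ε > 0
  have key : ∀ ε : ℝ, 0 < ε → ∃ γ s C : ℝ,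
      0 < γ ∧ γ ≤ 1 ∧ s = Real.exp (2 * γ / ε) ∧ 1 < s ∧ 1 ≤ C ∧
      ∀ n : ℕ, ∫ ω, s ^ sarrtDepth X n ω ∂P ≤ C * ((n : ℝ) + 1) ^ γ := by
    intro ε hε
    obtain ⟨γ, hγ0, hγ1, hγδ, hI⟩ := exists_good_gamma P (X 0) (hmeas 0) (hrange 0) hmean
      (3 / ε) (ε / 2) (by positivity) (by positivity)
    set s := Real.exp (2 * γ / ε) with hsdef
    have hs1 : 1 < s := Real.one_lt_exp_iff.2 (by positivity)
    have hs0 : 0 < s := by linarith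
    set I := ∫ ω, X 0 ω ^ γ ∂P with hIdef
    have hI0 : 0 ≤ I := integral_nonneg (fun ω => Real.rpow_nonneg (hrange 0 ω).1 γ)
    have hθ : s * I < 1 := by
      set x := γ / ε with hx
      have hx0 : 0 < x := by positivity
      have hx05 : x < 1/2 := by
        rw [hx, div_lt_iff₀ hε]
        linarith
      have hIlt : I < 1 - 3 * x := by
        have : (3 / ε) * γ = 3 * x := by rw [hx]; ring
        linarith [hI, this.symm ▸ hI]
      have h13 : 0 < 1 - 3 * x := by linarith
      have h2x : 0 < 1 - 2 * x := by linarith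
      have hexp := Real.add_one_le_exp (-(2 * γ / ε))
      have hseq : s⁻¹ = Real.exp (-(2 * γ / ε)) := by
        rw [hsdef, ← Real.exp_neg]
      have h2 : 1 - 2 * x ≤ s⁻¹ := by
        rw [hseq]
        have : -(2 * γ / ε) + 1 = 1 - 2 * x := by rw [hx]; ring
        linarith
      have hAB : (1 - 2 * x) * s ≤ 1 := by
        calc (1 - 2 * x) * s ≤ s⁻¹ * s := mul_le_mul_of_nonneg_right h2 hs0.le
          _ = 1 := inv_mul_cancel₀ hs0.ne'
      nlinarith [mul_pos hs0 hx0, mul_lt_mul_of_pos_left hIlt hs0]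
    obtain ⟨C, hC1, hC⟩ := sarrt_key P X hmeas hrange hindep hident hγ0 hγ1 hs1 hθ
    exact ⟨γ, s, C, hγ0, hγ1, hsdef, hs1, hC1, hC⟩
  have hDint : ∀ n : ℕ, Integrable (fun ω => (sarrtDepth X n ω : ℝ)) P := by
    intro n
    refine integrable_of_bounded'
      (measurable_bind' (measurable_sarrtDepth hmeas n) (fun k => measurable_const (a := (k:ℝ))))
      n (fun ω => ?_)
    rw [abs_of_nonneg (Nat.cast_nonneg _)]
    exact_mod_cast sarrtDepth_le hrange n ω
  constructor
  · -- convergence in probability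
    intro ε hε
    obtain ⟨γ, s, C, hγ0, hγ1, hsdef, hs1, hC1, hkey⟩ := key ε hε
    have hs0 : (0:ℝ) < s := by linarith
    have hbound : ∀ n : ℕ, 2 ≤ n →
        P {ω | ε < (sarrtDepth X n ω : ℝ) / Real.log n} ≤
        ENNReal.ofReal ((C * 2 ^ γ) * (((n:ℝ)) ^ γ)⁻¹) := by
      intro n hn2
      have hn1R : (1:ℝ) < n := by exact_mod_cast hn2
      have hn0 : (0:ℝ) < n := by linarith
      have hlog : 0 < Real.log n := Real.log_pos hn1R
      set g : Ω → ℝ≥0∞ := fun ω => ENNReal.ofReal (s ^ sarrtDepth X n ω) with hgdef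
      have hsub : {ω | ε < (sarrtDepth X n ω : ℝ) / Real.log n} ⊆
          {ω | ENNReal.ofReal ((n:ℝ) ^ (2 * γ)) ≤ g ω} := by
        intro ω hω
        simp only [Set.mem_setOf_eq] at hω ⊢
        have hD : ε * Real.log n < (sarrtDepth X n ω : ℝ) := (lt_div_iff₀ hlog).1 hω
        apply ENNReal.ofReal_le_ofReal
        have h1 : s ^ sarrtDepth X n ω =
            Real.exp ((sarrtDepth X n ω : ℝ) * (2 * γ / ε)) := by
          rw [hsdef, ← Real.exp_nat_mul]
        rw [h1, Real.rpow_def_of_pos hn0]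
        apply Real.exp_le_exp.2
        have h2 : ε * Real.log n * (2 * γ / ε) ≤ (sarrtDepth X n ω : ℝ) * (2 * γ / ε) :=
          mul_le_mul_of_nonneg_right hD.le (by positivity)
        have h3 : ε * Real.log n * (2 * γ / ε) = Real.log n * (2 * γ) := by
          field_simp
        linarith
      have hg_meas : AEMeasurable g P := by
        apply Measurable.aemeasurable
        exact ENNReal.measurable_ofReal.comp
          (measurable_bind' (measurable_sarrtDepth hmeas n)
            (fun k => measurable_const (a := s ^ k)))
      have hrpos : (0:ℝ) < (n:ℝ) ^ (2 * γ) := Real.rpow_pos_of_pos hn0 _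
      have hmark := meas_ge_le_lintegral_div hg_meas
        (ne_of_gt (ENNReal.ofReal_pos.2 hrpos)) ENNReal.ofReal_ne_top
      have hlg : ∫⁻ ω, g ω ∂P = ENNReal.ofReal (∫ ω, s ^ sarrtDepth X n ω ∂P) := by
        rw [ofReal_integral_eq_lintegral_ofReal (integrable_spow P X hmeas hrange hs1.le n)
          (Filter.Eventually.of_forall (fun ω => pow_nonneg hs0.le _))]
      have hreal : C * ((n:ℝ) + 1) ^ γ / (n:ℝ) ^ (2 * γ) ≤ (C * 2 ^ γ) * (((n:ℝ)) ^ γ)⁻¹ := by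
        have hnp : (0:ℝ) < (n:ℝ) ^ γ := Real.rpow_pos_of_pos hn0 γ
        rw [show (2:ℝ) * γ = γ + γ by ring, Real.rpow_add hn0]
        rw [div_le_iff₀ (by positivity)]
        have h1 : ((n:ℝ) + 1) ^ γ ≤ 2 ^ γ * (n:ℝ) ^ γ := by
          rw [← Real.mul_rpow (by norm_num) hn0.le]
          exact Real.rpow_le_rpow (by positivity) (by linarith) hγ0.le
        calc C * ((n:ℝ) + 1) ^ γ ≤ C * (2 ^ γ * (n:ℝ) ^ γ) :=
              mul_le_mul_of_nonneg_left h1 (by linarith)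
          _ = C * 2 ^ γ * ((n:ℝ) ^ γ)⁻¹ * ((n:ℝ) ^ γ * (n:ℝ) ^ γ) := by
              field_simp
      calc P {ω | ε < (sarrtDepth X n ω : ℝ) / Real.log n}
          ≤ P {ω | ENNReal.ofReal ((n:ℝ) ^ (2 * γ)) ≤ g ω} := measure_mono hsub
        _ ≤ (∫⁻ ω, g ω ∂P) / ENNReal.ofReal ((n:ℝ) ^ (2 * γ)) := hmark
        _ ≤ ENNReal.ofReal (C * ((n:ℝ) + 1) ^ γ) / ENNReal.ofReal ((n:ℝ) ^ (2 * γ)) := by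
            apply ENNReal.div_le_div _ le_rfl
            rw [hlg]
            exact ENNReal.ofReal_le_ofReal (hkey n)
        _ = ENNReal.ofReal (C * ((n:ℝ) + 1) ^ γ / (n:ℝ) ^ (2 * γ)) := by
            rw [ENNReal.ofReal_div_of_pos hrpos]
        _ ≤ ENNReal.ofReal ((C * 2 ^ γ) * (((n:ℝ)) ^ γ)⁻¹) := ENNReal.ofReal_le_ofReal hreal
    have hlim : Tendsto (fun n : ℕ => ENNReal.ofReal ((C * 2 ^ γ) * (((n:ℝ)) ^ γ)⁻¹))
        atTop (nhds 0) := by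
      have h1 : Tendsto (fun n : ℕ => (((n:ℝ)) ^ γ)⁻¹) atTop (nhds 0) :=
        ((tendsto_rpow_atTop hγ0).comp tendsto_natCast_atTop_atTop).inv_tendsto_atTop
      have h2 : Tendsto (fun n : ℕ => (C * 2 ^ γ) * (((n:ℝ)) ^ γ)⁻¹) atTop (nhds 0) := by
        simpa using h1.const_mul (C * 2 ^ γ)
      have h3 := (ENNReal.continuous_ofReal.tendsto 0).comp h2
      simpa [Function.comp_def] using h3
    refine tendsto_of_tendsto_of_tendsto_of_le_of_le' tendsto_const_nhds hlim ?_ ?_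
    · exact Filter.Eventually.of_forall (fun n => zero_le)
    · filter_upwards [eventually_ge_atTop 2] with n hn using hbound n hn
  · -- convergence of expectations
    have main2 : ∀ ε : ℝ, 0 < ε → ∀ᶠ n : ℕ in atTop,
        (∫ ω, (sarrtDepth X n ω : ℝ) ∂P) / Real.log n < ε := by
      intro ε hε
      obtain ⟨γ, s, C, hγ0, hγ1, hsdef, hs1, hC1, hkey⟩ := key (ε/2) (by positivity)
      have hs0 : (0:ℝ) < s := by linarith
      have hlgs : Real.log s = 2 * γ / (ε/2) := by rw [hsdef, Real.log_exp]
      have hlgs0 : 0 < Real.log s := by rw [hlgs]; positivity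
      set B : ℝ := C * 2 ^ γ / Real.log s with hB
      have hB0 : 0 ≤ B := by positivity
      have hub : ∀ n : ℕ, 2 ≤ n →
          (∫ ω, (sarrtDepth X n ω : ℝ) ∂P) / Real.log n ≤ ε/2 + B / Real.log n := by
        intro n hn2
        have hn1R : (1:ℝ) < n := by exact_mod_cast hn2
        have hn0 : (0:ℝ) < n := by linarith
        have hlog : 0 < Real.log n := Real.log_pos hn1R
        set c : ℝ := ((n:ℝ) ^ (2 * γ))⁻¹ / Real.log s with hc
        have hc0 : 0 < c := by
          rw [hc]
          have := Real.rpow_pos_of_pos hn0 (2*γ)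
          positivity
        have hpt : ∀ ω, (sarrtDepth X n ω : ℝ) ≤
            ε/2 * Real.log n + s ^ sarrtDepth X n ω * c := by
          intro ω
          set d : ℝ := (sarrtDepth X n ω : ℝ) with hd
          have hspos : 0 < s ^ sarrtDepth X n ω := pow_pos hs0 _
          by_cases hcase : d ≤ ε/2 * Real.log n
          · nlinarith
          · push_neg at hcase
            have h1 := Real.add_one_le_exp ((d - ε/2 * Real.log n) * Real.log s)
            have h2 : Real.exp ((d - ε/2 * Real.log n) * Real.log s) =
                s ^ sarrtDepth X n ω * ((n:ℝ) ^ (2 * γ))⁻¹ := by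
              rw [sub_mul, Real.exp_sub]
              congr 1
              · rw [hd, Real.exp_nat_mul, Real.exp_log hs0]
              · rw [← Real.exp_log (Real.rpow_pos_of_pos hn0 (2*γ)), Real.log_rpow hn0]
                congr 1
                rw [hlgs]
                field_simp
            have h3 : (d - ε/2 * Real.log n) * Real.log s ≤
                s ^ sarrtDepth X n ω * ((n:ℝ) ^ (2 * γ))⁻¹ := by
              rw [← h2]
              linarith
            have h4 : d - ε/2 * Real.log n ≤ s ^ sarrtDepth X n ω * ((n:ℝ) ^ (2 * γ))⁻¹ / Real.log s :=
              (le_div_iff₀ hlgs0).2 (by linarith [h3])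
            have h5 : s ^ sarrtDepth X n ω * ((n:ℝ) ^ (2 * γ))⁻¹ / Real.log s
                = s ^ sarrtDepth X n ω * c := by
              rw [hc]; ring
            linarith
        have hIc : Integrable (fun ω => ε/2 * Real.log n + s ^ sarrtDepth X n ω * c) P :=
          (integrable_const _).add ((integrable_spow P X hmeas hrange hs1.le n).mul_const c)
        have hInt : ∫ ω, (sarrtDepth X n ω : ℝ) ∂P ≤
            ε/2 * Real.log n + (∫ ω, s ^ sarrtDepth X n ω ∂P) * c := by
          calc ∫ ω, (sarrtDepth X n ω : ℝ) ∂P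
              ≤ ∫ ω, (ε/2 * Real.log n + s ^ sarrtDepth X n ω * c) ∂P :=
                integral_mono (hDint n) hIc hpt
            _ = ε/2 * Real.log n + (∫ ω, s ^ sarrtDepth X n ω ∂P) * c := by
                rw [integral_add (integrable_const _)
                  ((integrable_spow P X hmeas hrange hs1.le n).mul_const c)]
                simp only [integral_const, measure_univ, probReal_univ, ENNReal.toReal_one, smul_eq_mul,
                  one_mul]
                rw [integral_mul_const]
        have hend : (∫ ω, s ^ sarrtDepth X n ω ∂P) * c ≤ B := by
          have h1 : (∫ ω, s ^ sarrtDepth X n ω ∂P) * c ≤ (C * ((n:ℝ) + 1) ^ γ) * c :=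
            mul_le_mul_of_nonneg_right (hkey n) hc0.le
          have hnp : (0:ℝ) < (n:ℝ) ^ γ := Real.rpow_pos_of_pos hn0 γ
          have h1' : ((n:ℝ) + 1) ^ γ ≤ 2 ^ γ * (n:ℝ) ^ γ := by
            rw [← Real.mul_rpow (by norm_num) hn0.le]
            exact Real.rpow_le_rpow (by positivity) (by linarith) hγ0.le
          have h2γ : (n:ℝ) ^ (2 * γ) = (n:ℝ) ^ γ * (n:ℝ) ^ γ := by
            rw [show (2:ℝ) * γ = γ + γ by ring, Real.rpow_add hn0]
          have hγ1n : (1:ℝ) ≤ (n:ℝ) ^ γ :=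
            Real.one_le_rpow (by linarith) hγ0.le
          have hfin : C * ((n:ℝ)+1)^γ * (((n:ℝ)^(2*γ))⁻¹) ≤ C * 2^γ := by
            rw [h2γ, mul_inv]
            have hip : ((n:ℝ)^γ)⁻¹ ≤ 1 := by
              rw [inv_le_one_iff₀]; right; exact hγ1n
            calc C * ((n:ℝ)+1)^γ * (((n:ℝ)^γ)⁻¹ * ((n:ℝ)^γ)⁻¹)
                ≤ C * (2^γ * (n:ℝ)^γ) * (((n:ℝ)^γ)⁻¹ * ((n:ℝ)^γ)⁻¹) := by
                  apply mul_le_mul_of_nonneg_right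
                    (mul_le_mul_of_nonneg_left h1' (by linarith)) (by positivity)
              _ = C * 2^γ * (((n:ℝ)^γ) * ((n:ℝ)^γ)⁻¹) * ((n:ℝ)^γ)⁻¹ := by ring
              _ = C * 2^γ * ((n:ℝ)^γ)⁻¹ := by
                  rw [mul_inv_cancel₀ hnp.ne', mul_one]
              _ ≤ C * 2^γ * 1 := mul_le_mul_of_nonneg_left hip (by positivity)
              _ = C * 2^γ := mul_one _
          have h2 : (C * ((n:ℝ) + 1) ^ γ) * c ≤ B := by
            rw [hc, hB]
            rw [div_eq_mul_inv, div_eq_mul_inv, ← mul_assoc]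
            exact mul_le_mul_of_nonneg_right hfin (by positivity)
          linarith
        have := add_le_add_left hend (ε/2 * Real.log n)
        calc (∫ ω, (sarrtDepth X n ω : ℝ) ∂P) / Real.log n
            ≤ (ε/2 * Real.log n + B) / Real.log n := by
              gcongr
              linarith
          _ = ε/2 + B / Real.log n := by
              field_simp
      filter_upwards [eventually_ge_atTop 2,
        ((Real.tendsto_log_atTop.comp tendsto_natCast_atTop_atTop).eventually_gt_atTop
          (B / (ε/2)))] with n hn2 hlogn
      have hn1R : (1:ℝ) < n := by exact_mod_cast hn2
      have hlog : 0 < Real.log n := Real.log_pos hn1R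
      have h1 := hub n hn2
      have h2 : B / Real.log n < ε/2 := by
        rw [div_lt_iff₀ hlog]
        have : B / (ε/2) < Real.log n := hlogn
        rw [div_lt_iff₀ (by positivity : (0:ℝ) < ε/2)] at this
        linarith [this]
      linarith
    have hnonneg : ∀ᶠ n : ℕ in atTop,
        0 ≤ (∫ ω, (sarrtDepth X n ω : ℝ) ∂P) / Real.log n := by
      filter_upwards [eventually_ge_atTop 2] with n hn2
      have hn1R : (1:ℝ) < n := by exact_mod_cast hn2
      apply div_nonneg _ (Real.log_pos hn1R).le
      exact integral_nonneg (fun ω => Nat.cast_nonneg _)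
    rw [tendsto_order]
    constructor
    · intro a ha
      filter_upwards [hnonneg] with n hn
      linarith
    · intro a ha
      exact main2 a ha
end

section
/- Let (H_n) be a non-decreasing sequence of random variables and α ≥ 0 such that for every ε > 0, P(H_n ≥ (α+ε) log n) = O(1/log n) and P(H_n ≤ (α−ε) log n) = O(1/log n). Then H_n / log n → α almost surely. -/
open MeasureTheory Filter
open scoped ENNReal


lemma bc_aux {Ω : Type*} [MeasurableSpace Ω] (P : Measure Ω) [IsFiniteMeasure P]
    (s : ℕ → Set Ω) (C : ℝ)
    (hC : ∀ k : ℕ, (P (s k)).toReal ≤ C / (((k : ℝ) + 1) ^ 2 * Real.log 3)) :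
    ∀ᵐ ω ∂P, ∀ᶠ k in atTop, ω ∉ s k := by
  have hlog3 : 0 < Real.log 3 := Real.log_pos (by norm_num)
  apply ae_eventually_notMem
  have hsum : Summable (fun k : ℕ => C / (((k : ℝ) + 1) ^ 2 * Real.log 3)) := by
    have h1 : Summable (fun n : ℕ => 1 / ((n : ℝ)) ^ 2) :=
      Real.summable_one_div_nat_pow.mpr one_lt_two
    have h2 : Summable (fun k : ℕ => 1 / (((k : ℝ) + 1)) ^ 2) := by
      have := (summable_nat_add_iff 1).mpr h1
      refine this.congr fun k => by push_cast; ring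
    refine (h2.mul_left (C / Real.log 3)).congr fun k => ?_
    field_simp
  have hnn : ∀ k : ℕ, 0 ≤ C / (((k : ℝ) + 1) ^ 2 * Real.log 3) := fun k =>
    le_trans ENNReal.toReal_nonneg (hC k)
  refine ne_top_of_le_ne_top (b := ENNReal.ofReal (∑' k : ℕ, C / (((k : ℝ) + 1) ^ 2 * Real.log 3)))
    ENNReal.ofReal_ne_top ?_
  rw [ENNReal.ofReal_tsum_of_nonneg hnn hsum]
  refine ENNReal.tsum_le_tsum fun k => ?_
  rw [← ENNReal.ofReal_toReal (measure_ne_top P (s k))]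
  exact ENNReal.ofReal_le_ofReal (hC k)

lemma log_cast_pow (m : ℕ) : Real.log ((3 ^ m : ℕ) : ℝ) = (m : ℝ) * Real.log 3 := by
  push_cast
  exact Real.log_pow 3 m

lemma nat_facts {K n : ℕ} (hn : 3 ^ ((K + 1) ^ 2) ≤ n) :
    K + 1 ≤ Nat.sqrt (Nat.log 3 n) ∧ 3 ^ (Nat.sqrt (Nat.log 3 n)) ^ 2 ≤ n ∧
      n < 3 ^ (Nat.sqrt (Nat.log 3 n) + 1) ^ 2 ∧ 2 ≤ n := by
  have hn2 : 2 ≤ n := le_trans (le_trans (by norm_num) (Nat.le_self_pow (by positivity) 3)) hn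
  have hn0 : n ≠ 0 := by omega
  refine ⟨?_, ?_, ?_, hn2⟩
  · have h1 : (K + 1) ^ 2 ≤ Nat.log 3 n := by
      have := Nat.log_mono_right (b := 3) hn
      rwa [Nat.log_pow (by norm_num)] at this
    have := Nat.sqrt_le_sqrt h1
    rwa [Nat.sqrt_eq'] at this
  · exact le_trans (Nat.pow_le_pow_right (by norm_num) (Nat.sqrt_le' _)) (Nat.pow_log_le_self 3 hn0)
  · exact lt_of_lt_of_le (Nat.lt_pow_succ_log_self (by norm_num) n)
      (Nat.pow_le_pow_right (by norm_num) (Nat.lt_succ_sqrt' (Nat.log 3 n)))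

lemma ratio_tendsto : Tendsto (fun k : ℕ => ((k : ℝ) + 1) ^ 2 / (k : ℝ) ^ 2) atTop (nhds 1) := by
  have h0 : Tendsto (fun k : ℕ => (1 + 1 / (k : ℝ)) ^ 2) atTop (nhds 1) := by
    have := (tendsto_const_nhds (x := (1:ℝ)) (f := atTop)).add tendsto_one_div_atTop_nhds_zero_nat
    have h := this.pow 2
    norm_num at h
    exact h.congr fun k => by rw [one_div]
  refine h0.congr' ?_
  filter_upwards [eventually_ge_atTop 1] with k hk
  have hk0 : (k : ℝ) ≠ 0 := by positivity
  have hk0' : (0:ℝ) < (k:ℝ) := by positivity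
  field_simp

lemma upper_step {Ω : Type*} [MeasurableSpace Ω] (P : Measure Ω) [IsProbabilityMeasure P]
    (H : ℕ → Ω → ℝ) (hmono : ∀ ω, Monotone (fun n => H n ω)) (α : ℝ) (hα : 0 ≤ α)
    (hupper : ∀ ε : ℝ, 0 < ε → ∃ C : ℝ, ∀ n : ℕ, 2 ≤ n →
      (P {ω | (α + ε) * Real.log n ≤ H n ω}).toReal ≤ C / Real.log n)
    (ε : ℝ) (hε : 0 < ε) :
    ∀ᵐ ω ∂P, ∀ᶠ n : ℕ in atTop, H n ω / Real.log n < α + ε := by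
  obtain ⟨C, hC⟩ := hupper (ε / 2) (by positivity)
  have hlog3 : 0 < Real.log 3 := Real.log_pos (by norm_num)
  have hbc : ∀ᵐ ω ∂P, ∀ᶠ k in atTop,
      ω ∉ {ω | (α + ε / 2) * Real.log ((3 ^ ((k + 1) ^ 2) : ℕ) : ℝ) ≤ H (3 ^ ((k + 1) ^ 2)) ω} := by
    refine bc_aux P _ C fun k => ?_
    have h2 : 2 ≤ 3 ^ ((k + 1) ^ 2) :=
      le_trans (by norm_num) (Nat.le_self_pow (by positivity) 3)
    refine le_trans (hC (3 ^ ((k + 1) ^ 2)) h2) (le_of_eq ?_)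
    rw [log_cast_pow]
    push_cast
    ring_nf
  have hK0 : ∀ᶠ k : ℕ in atTop, (α + ε / 2) * (((k : ℝ) + 1) ^ 2 / (k : ℝ) ^ 2) < α + ε := by
    have ht : Tendsto (fun k : ℕ => (α + ε / 2) * (((k : ℝ) + 1) ^ 2 / (k : ℝ) ^ 2)) atTop
        (nhds ((α + ε / 2) * 1)) := ratio_tendsto.const_mul _
    exact ht.eventually_lt_const (by linarith)
  filter_upwards [hbc] with ω hω
  obtain ⟨K, hK⟩ := eventually_atTop.mp (hω.and hK0)
  rw [eventually_atTop]
  refine ⟨3 ^ ((K + 1) ^ 2), fun n hn => ?_⟩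
  obtain ⟨hkK, hlow, hhigh, hn2⟩ := nat_facts hn
  set k := Nat.sqrt (Nat.log 3 n) with hk
  obtain ⟨hnot, hratio⟩ := hK k (by omega)
  simp only [Set.mem_setOf_eq, not_le] at hnot
  rw [log_cast_pow] at hnot
  push_cast at hnot
  have hkpos : 0 < k := by omega
  have hkR : (0 : ℝ) < (k : ℝ) := by exact_mod_cast hkpos
  have hlogn_pos : 0 < Real.log n := by
    refine Real.log_pos ?_
    have : (2 : ℝ) ≤ (n : ℝ) := by exact_mod_cast hn2
    linarith
  have hloglow : (k : ℝ) ^ 2 * Real.log 3 ≤ Real.log n := by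
    have := Real.log_le_log (by positivity)
      (show ((3 ^ k ^ 2 : ℕ) : ℝ) ≤ (n : ℝ) by exact_mod_cast hlow)
    rwa [log_cast_pow, Nat.cast_pow] at this
  rw [div_lt_iff₀ hlogn_pos]
  have hmon : H n ω ≤ H (3 ^ ((k + 1) ^ 2)) ω := hmono ω (le_of_lt hhigh)
  have hk2 : (0 : ℝ) < (k : ℝ) ^ 2 := by positivity
  have hB : (α + ε / 2) * ((k : ℝ) + 1) ^ 2 < (α + ε) * (k : ℝ) ^ 2 := by
    rw [← mul_div_assoc] at hratio
    exact (div_lt_iff₀ hk2).mp hratio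
  have hαε : (0 : ℝ) ≤ α + ε := by linarith
  calc H n ω ≤ H (3 ^ ((k + 1) ^ 2)) ω := hmon
    _ < (α + ε / 2) * (((k : ℝ) + 1) ^ 2 * Real.log 3) := hnot
    _ ≤ (α + ε) * Real.log n := by
        nlinarith [mul_lt_mul_of_pos_right hB hlog3, mul_le_mul_of_nonneg_left hloglow hαε]

lemma lower_step {Ω : Type*} [MeasurableSpace Ω] (P : Measure Ω) [IsProbabilityMeasure P]
    (H : ℕ → Ω → ℝ) (hmono : ∀ ω, Monotone (fun n => H n ω)) (α : ℝ) (hα : 0 ≤ α)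
    (hlower : ∀ ε : ℝ, 0 < ε → ∃ C : ℝ, ∀ n : ℕ, 2 ≤ n →
      (P {ω | H n ω ≤ (α - ε) * Real.log n}).toReal ≤ C / Real.log n)
    (ε : ℝ) (hε : 0 < ε) :
    ∀ᵐ ω ∂P, ∀ᶠ n : ℕ in atTop, α - ε < H n ω / Real.log n := by
  obtain ⟨C, hC⟩ := hlower (ε / 2) (by positivity)
  have hlog3 : 0 < Real.log 3 := Real.log_pos (by norm_num)
  have hbc : ∀ᵐ ω ∂P, ∀ᶠ k in atTop,
      ω ∉ {ω | H (3 ^ ((k + 1) ^ 2)) ω ≤ (α - ε / 2) * Real.log ((3 ^ ((k + 1) ^ 2) : ℕ) : ℝ)} := by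
    refine bc_aux P _ C fun k => ?_
    have h2 : 2 ≤ 3 ^ ((k + 1) ^ 2) :=
      le_trans (by norm_num) (Nat.le_self_pow (by positivity) 3)
    refine le_trans (hC (3 ^ ((k + 1) ^ 2)) h2) (le_of_eq ?_)
    rw [log_cast_pow]
    push_cast
    ring_nf
  have hK0 : ∀ᶠ k : ℕ in atTop, (α - ε) * (((k : ℝ) + 1) ^ 2 / (k : ℝ) ^ 2) < α - ε / 2 := by
    have ht : Tendsto (fun k : ℕ => (α - ε) * (((k : ℝ) + 1) ^ 2 / (k : ℝ) ^ 2)) atTop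
        (nhds ((α - ε) * 1)) := ratio_tendsto.const_mul _
    exact ht.eventually_lt_const (by linarith)
  filter_upwards [hbc] with ω hω
  obtain ⟨K, hK⟩ := eventually_atTop.mp (hω.and hK0)
  rw [eventually_atTop]
  refine ⟨3 ^ ((K + 1 + 1) ^ 2), fun n hn => ?_⟩
  obtain ⟨hkK, hlow, hhigh, hn2⟩ := nat_facts hn
  set k := Nat.sqrt (Nat.log 3 n) with hk
  have hkpos : 0 < k := by omega
  have hkR : (0 : ℝ) < (k : ℝ) := by exact_mod_cast hkpos
  obtain ⟨hnot, -⟩ := hK (k - 1) (by omega)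
  obtain ⟨-, hratio⟩ := hK k (by omega)
  have hjk : k - 1 + 1 = k := by omega
  rw [hjk] at hnot
  simp only [Set.mem_setOf_eq, not_le] at hnot
  rw [log_cast_pow] at hnot
  push_cast at hnot
  -- hnot : (α - ε / 2) * ((k:ℝ)^2 * Real.log 3) < H (3 ^ k ^ 2) ω
  have hlogn_pos : 0 < Real.log n := by
    refine Real.log_pos ?_
    have : (2 : ℝ) ≤ (n : ℝ) := by exact_mod_cast hn2
    linarith
  have hloglow : (k : ℝ) ^ 2 * Real.log 3 ≤ Real.log n := by
    have := Real.log_le_log (by positivity)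
      (show ((3 ^ k ^ 2 : ℕ) : ℝ) ≤ (n : ℝ) by exact_mod_cast hlow)
    rwa [log_cast_pow, Nat.cast_pow] at this
  have hloghigh : Real.log n ≤ ((k : ℝ) + 1) ^ 2 * Real.log 3 := by
    have hnpos : (0 : ℝ) < (n : ℝ) := by
      have : (2 : ℝ) ≤ (n : ℝ) := by exact_mod_cast hn2
      linarith
    have := Real.log_le_log hnpos
      (show ((n : ℕ) : ℝ) ≤ ((3 ^ (k + 1) ^ 2 : ℕ) : ℝ) by exact_mod_cast le_of_lt hhigh)
    rw [log_cast_pow] at this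
    push_cast at this
    linarith
  rw [lt_div_iff₀ hlogn_pos]
  have hmon : H (3 ^ k ^ 2) ω ≤ H n ω := hmono ω hlow
  have hsuff : (α - ε) * Real.log n ≤ (α - ε / 2) * ((k : ℝ) ^ 2 * Real.log 3) := by
    rcases le_or_gt (α - ε) 0 with hneg | hpos
    · have h1 : (α - ε) * Real.log n ≤ (α - ε) * ((k : ℝ) ^ 2 * Real.log 3) :=
        mul_le_mul_of_nonpos_left hloglow hneg
      have h2 : (α - ε) * ((k : ℝ) ^ 2 * Real.log 3) ≤ (α - ε / 2) * ((k : ℝ) ^ 2 * Real.log 3) :=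
        mul_le_mul_of_nonneg_right (by linarith) (by positivity)
      linarith
    · have hk2 : (0 : ℝ) < (k : ℝ) ^ 2 := by positivity
      have hB : (α - ε) * ((k : ℝ) + 1) ^ 2 < (α - ε / 2) * (k : ℝ) ^ 2 := by
        rw [← mul_div_assoc] at hratio
        exact (div_lt_iff₀ hk2).mp hratio
      have h1 : (α - ε) * Real.log n ≤ (α - ε) * (((k : ℝ) + 1) ^ 2 * Real.log 3) :=
        mul_le_mul_of_nonneg_left hloghigh (le_of_lt hpos)
      nlinarith [mul_lt_mul_of_pos_right hB hlog3]
  linarith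


/-- If `(H n)` is a pointwise non-decreasing sequence of random variables, `α ≥ 0`,
and for every `ε > 0` both `P(H n ≥ (α+ε) log n)` and `P(H n ≤ (α−ε) log n)` are
`O(1/log n)`, then `H n / log n → α` almost surely. -/
theorem almost_sure_convergence_from_prob_bounds
    {Ω : Type*} [MeasurableSpace Ω] (P : Measure Ω) [IsProbabilityMeasure P]
    (H : ℕ → Ω → ℝ)
    (hmono : ∀ ω, Monotone (fun n => H n ω))
    (α : ℝ) (hα : 0 ≤ α)
    (hupper : ∀ ε : ℝ, 0 < ε → ∃ C : ℝ, ∀ n : ℕ, 2 ≤ n →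
      (P {ω | (α + ε) * Real.log n ≤ H n ω}).toReal ≤ C / Real.log n)
    (hlower : ∀ ε : ℝ, 0 < ε → ∃ C : ℝ, ∀ n : ℕ, 2 ≤ n →
      (P {ω | H n ω ≤ (α - ε) * Real.log n}).toReal ≤ C / Real.log n) :
    ∀ᵐ ω ∂P, Tendsto (fun n : ℕ => H n ω / Real.log n) atTop (nhds α) := by
  have key : ∀ m : ℕ, ∀ᵐ ω ∂P, ∀ᶠ n : ℕ in atTop,
      |H n ω / Real.log n - α| < 1 / ((m : ℝ) + 1) := by
    intro m
    have hεpos : (0 : ℝ) < 1 / ((m : ℝ) + 1) := by positivity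
    filter_upwards [upper_step P H hmono α hα hupper _ hεpos,
      lower_step P H hmono α hα hlower _ hεpos] with ω hu hl
    filter_upwards [hu, hl] with n hun hln
    rw [abs_sub_lt_iff]
    constructor <;> linarith
  have all : ∀ᵐ ω ∂P, ∀ m : ℕ, ∀ᶠ n : ℕ in atTop,
      |H n ω / Real.log n - α| < 1 / ((m : ℝ) + 1) := ae_all_iff.mpr key
  filter_upwards [all] with ω hω
  rw [Metric.tendsto_atTop]
  intro δ hδ
  obtain ⟨m, hm⟩ := exists_nat_one_div_lt hδ
  obtain ⟨N, hN⟩ := eventually_atTop.mp (hω m)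
  exact ⟨N, fun n hn => by rw [Real.dist_eq]; exact (hN n hn).trans hm⟩
end

section
/- Let Y be a negative random variable whose distribution is not a single mass, with μ = −E[Y] ∈ (0, ∞]. Then there exists z > −μ with Λ*(z) < +∞, where Λ*(z) = sup_{λ∈ℝ}{λz − log E[e^{λY}]}. Moreover, if log E[e^{λY}] < +∞ for some λ < 0, there also exists z < −μ with Λ*(z) < +∞. -/
open MeasureTheory Filter
open scoped ENNReal Classical

/-- The cumulant generating function `Λ(λ) = log E[e^{λY}]`, valued in `EReal`. -/
noncomputable def cgfE {Ω : Type*} [MeasurableSpace Ω] (P : Measure Ω)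
    (Y : Ω → ℝ) (l : ℝ) : EReal :=
  if Integrable (fun ω => Real.exp (l * Y ω)) P then
    ((Real.log (∫ ω, Real.exp (l * Y ω) ∂P) : ℝ) : EReal) else ⊤

/-- The Fenchel–Legendre transform `Λ*(z) = sup_{λ ∈ ℝ} {λ z − Λ(λ)}`. -/
noncomputable def legendreE {Ω : Type*} [MeasurableSpace Ω] (P : Measure Ω)
    (Y : Ω → ℝ) (z : ℝ) : EReal :=
  ⨆ l : ℝ, ((l * z : ℝ) : EReal) - cgfE P Y l

section Helpers

set_option linter.unusedSectionVars false

variable {Ω : Type*} [MeasurableSpace Ω] {P : Measure Ω} [IsProbabilityMeasure P] {Y : Ω → ℝ}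

lemma int_exp_of_nonneg (hmeas : Measurable Y) (hneg : ∀ᵐ ω ∂P, Y ω < 0) {l : ℝ} (hl : 0 ≤ l) :
    Integrable (fun ω => Real.exp (l * Y ω)) P := by
  refine Integrable.mono' (integrable_const 1) ((hmeas.const_mul l).exp.aestronglyMeasurable) ?_
  filter_upwards [hneg] with ω hω
  rw [Real.norm_eq_abs, abs_of_pos (Real.exp_pos _)]
  exact Real.exp_le_one_iff.2 (mul_nonpos_of_nonneg_of_nonpos hl hω.le)

lemma integrable_Y_of_neg (hmeas : Measurable Y) (hneg : ∀ᵐ ω ∂P, Y ω < 0) {l : ℝ} (hl : l < 0)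
    (hint : Integrable (fun ω => Real.exp (l * Y ω)) P) : Integrable Y P := by
  refine Integrable.mono' (hint.const_mul (-l)⁻¹) hmeas.aestronglyMeasurable ?_
  filter_upwards [hneg] with ω hω
  rw [Real.norm_eq_abs, abs_of_neg hω]
  have h1 := Real.add_one_le_exp (l * Y ω)
  have h2 : (0:ℝ) < -l := by linarith
  rw [le_inv_mul_iff₀ h2]
  nlinarith

lemma integral_exp_pos' {l : ℝ} (hint : Integrable (fun ω => Real.exp (l * Y ω)) P) :
    0 < ∫ ω, Real.exp (l * Y ω) ∂P := by
  simpa [ProbabilityTheory.mgf] using ProbabilityTheory.mgf_pos (μ := P) (X := Y) (t := l) hint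

lemma jensen_exp (hY : Integrable Y P) {l : ℝ}
    (hint : Integrable (fun ω => Real.exp (l * Y ω)) P) :
    l * ∫ ω, Y ω ∂P ≤ Real.log (∫ ω, Real.exp (l * Y ω) ∂P) := by
  have h := convexOn_exp.map_integral_le (μ := P) Real.continuous_exp.continuousOn isClosed_univ
    (Eventually.of_forall fun ω => Set.mem_univ _) (hY.const_mul l)
    (by simpa [Function.comp_def] using hint)
  rw [integral_const_mul] at h
  rw [Real.le_log_iff_exp_le (integral_exp_pos' hint)]
  simpa using h

lemma jensen_exp_strict (hY : Integrable Y P)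
    (hnonconst : ¬ ∃ c : ℝ, ∀ᵐ ω ∂P, Y ω = c) {l : ℝ} (hl : l ≠ 0)
    (hint : Integrable (fun ω => Real.exp (l * Y ω)) P) :
    l * ∫ ω, Y ω ∂P < Real.log (∫ ω, Real.exp (l * Y ω) ∂P) := by
  have h := strictConvexOn_exp.ae_eq_const_or_map_average_lt (μ := P) Real.continuous_exp.continuousOn
    isClosed_univ (Eventually.of_forall fun ω => Set.mem_univ _) (hY.const_mul l)
    (by simpa [Function.comp_def] using hint)
  rcases h with h | h
  · exfalso
    refine hnonconst ⟨(⨍ ω, l * Y ω ∂P) / l, ?_⟩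
    filter_upwards [h] with ω hω
    field_simp [Function.const] at hω ⊢
    exact hω
  · rw [average_eq_integral, average_eq_integral, integral_const_mul] at h
    rw [Real.lt_log_iff_exp_lt (integral_exp_pos' hint)]
    simpa using h

lemma jensen_rpow {a p : ℝ} (hp : 1 ≤ p)
    (hinta : Integrable (fun ω => Real.exp (a * Y ω)) P)
    (hintpa : Integrable (fun ω => Real.exp ((p * a) * Y ω)) P) :
    p * Real.log (∫ ω, Real.exp (a * Y ω) ∂P) ≤ Real.log (∫ ω, Real.exp ((p * a) * Y ω) ∂P) := by
  have hgc : ContinuousOn (fun t : ℝ => t ^ p) (Set.Ici 0) :=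
    (continuous_id.rpow_const fun x => Or.inr (by linarith)).continuousOn
  have hkey : ∀ ω, Real.exp (a * Y ω) ^ p = Real.exp ((p * a) * Y ω) := by
    intro ω; rw [← Real.exp_mul]; ring_nf
  have h := (convexOn_rpow hp).map_integral_le (μ := P) hgc isClosed_Ici
    (Eventually.of_forall fun ω => Real.exp_nonneg _) hinta
    (by simpa only [Function.comp_def, hkey] using hintpa)
  simp only [Function.comp, hkey] at h
  have hpos := integral_exp_pos' hinta
  calc p * Real.log (∫ ω, Real.exp (a * Y ω) ∂P)
      = Real.log ((∫ ω, Real.exp (a * Y ω) ∂P) ^ p) := (Real.log_rpow hpos p).symm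
    _ ≤ Real.log (∫ ω, Real.exp ((p * a) * Y ω) ∂P) :=
        Real.log_le_log (Real.rpow_pos_of_pos hpos p) h

lemma mean_neg (hmeas : Measurable Y) (hY : Integrable Y P) (hneg : ∀ᵐ ω ∂P, Y ω < 0) :
    ∫ ω, Y ω ∂P < 0 := by
  have hYneg : Integrable (fun ω => -Y ω) P := hY.neg
  have hnn : 0 ≤ᵐ[P] fun ω => -Y ω := by
    filter_upwards [hneg] with ω hω; show (0:ℝ) ≤ -Y ω; linarith
  have hge : 0 ≤ ∫ ω, -Y ω ∂P := integral_nonneg_of_ae hnn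
  rcases hge.lt_or_eq with h | h
  · rw [integral_neg] at h; linarith
  · exfalso
    have hzero : (fun ω => -Y ω) =ᵐ[P] 0 :=
      (integral_eq_zero_iff_of_nonneg_ae hnn hYneg).1 h.symm
    have hfalse : ∀ᵐ _ω ∂P, False := by
      filter_upwards [hneg, hzero] with ω h1 h2
      simp only [Pi.zero_apply, neg_eq_zero] at h2
      linarith [h2 ▸ h1]
    obtain ⟨ω, h⟩ := hfalse.exists
    exact h

lemma mu_formula (hY : Integrable Y P) (hneg : ∀ᵐ ω ∂P, Y ω < 0) :
    ∫⁻ ω, ENNReal.ofReal (- Y ω) ∂P = ENNReal.ofReal (- ∫ ω, Y ω ∂P) := by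
  rw [← integral_neg]
  exact (ofReal_integral_eq_lintegral_ofReal hY.neg
    (by filter_upwards [hneg] with ω hω; simp; linarith)).symm

lemma mu_infinite (hmeas : Measurable Y) (hneg : ∀ᵐ ω ∂P, Y ω < 0) (hnY : ¬ Integrable Y P) :
    ∫⁻ ω, ENNReal.ofReal (- Y ω) ∂P = ⊤ := by
  by_contra h
  apply hnY
  have hfi : HasFiniteIntegral (fun ω => -Y ω) P := by
    rw [hasFiniteIntegral_iff_ofReal (by filter_upwards [hneg] with ω hω; simp; linarith)]
    exact lt_top_iff_ne_top.2 h
  have : Integrable (fun ω => -Y ω) P := ⟨hmeas.neg.aestronglyMeasurable, hfi⟩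
  exact integrable_neg_iff.mp this

lemma legendre_lt_top {z C : ℝ}
    (h : ∀ l : ℝ, Integrable (fun ω => Real.exp (l * Y ω)) P →
      l * z - Real.log (∫ ω, Real.exp (l * Y ω) ∂P) ≤ C) :
    legendreE P Y z < ⊤ := by
  unfold legendreE cgfE
  refine lt_of_le_of_lt (iSup_le fun l => ?_) (EReal.coe_lt_top C)
  split_ifs with hint
  · rw [← EReal.coe_sub]
    exact_mod_cast h l hint
  · rw [EReal.sub_top]; exact bot_le

end Helpers

/-- For a non-degenerate negative random variable `Y` with `μ = −E[Y] ∈ (0, ∞]`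
(encoded as `μ = ∫⁻ (−Y) dP`), there exists `z > −μ` with `Λ*(z) < ∞`; and if
`Λ(λ₀) < ∞` for some `λ₀ < 0`, there also exists `z < −μ` with `Λ*(z) < ∞`. -/
theorem legendre_finite_points
    {Ω : Type*} [MeasurableSpace Ω] (P : Measure Ω) [IsProbabilityMeasure P]
    (Y : Ω → ℝ) (hmeas : Measurable Y)
    (hneg : ∀ᵐ ω ∂P, Y ω < 0)
    (hnonconst : ¬ ∃ c : ℝ, ∀ᵐ ω ∂P, Y ω = c)
    (μ : ℝ≥0∞) (hμ : μ = ∫⁻ ω, ENNReal.ofReal (- Y ω) ∂P) :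
    (∃ z : ℝ, ENNReal.ofReal (-z) < μ ∧ legendreE P Y z < ⊤) ∧
    ((∃ l₀ : ℝ, l₀ < 0 ∧ Integrable (fun ω => Real.exp (l₀ * Y ω)) P) →
      ∃ z : ℝ, μ < ENNReal.ofReal (-z) ∧ legendreE P Y z < ⊤) := by
  have int1 : Integrable (fun ω => Real.exp (1 * Y ω)) P :=
    int_exp_of_nonneg hmeas hneg zero_le_one
  set z₁ : ℝ := Real.log (∫ ω, Real.exp (1 * Y ω) ∂P) with hz₁
  constructor
  · refine ⟨z₁, ?_, ?_⟩
    · by_cases hY : Integrable Y P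
      · rw [hμ, mu_formula hY hneg]
        have hm := mean_neg hmeas hY hneg
        have hj : 1 * ∫ ω, Y ω ∂P < z₁ := jensen_exp_strict hY hnonconst one_ne_zero int1
        rw [one_mul] at hj
        rw [ENNReal.ofReal_lt_ofReal_iff (by linarith)]
        linarith
      · rw [hμ, mu_infinite hmeas hneg hY]; exact ENNReal.ofReal_lt_top
    · apply legendre_lt_top (C := |z₁|)
      intro l hint
      have habs : (0:ℝ) ≤ |z₁| := abs_nonneg _
      rcases lt_or_ge l 0 with hl | hl
      · have hY := integrable_Y_of_neg hmeas hneg hl hint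
        have hj := jensen_exp hY hint
        have hj1 : 1 * ∫ ω, Y ω ∂P ≤ z₁ := jensen_exp hY int1
        rw [one_mul] at hj1
        nlinarith
      · rcases le_or_gt l 1 with hl1 | hl1
        · have hmono : ∫ ω, Real.exp (1 * Y ω) ∂P ≤ ∫ ω, Real.exp (l * Y ω) ∂P := by
            refine integral_mono_ae int1 hint ?_
            filter_upwards [hneg] with ω hω
            exact Real.exp_le_exp.2 (by nlinarith)
          have hlog : z₁ ≤ Real.log (∫ ω, Real.exp (l * Y ω) ∂P) :=
            Real.log_le_log (integral_exp_pos' int1) hmono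
          have h2 : (l - 1) * z₁ ≤ |z₁| := by
            calc (l - 1) * z₁ ≤ |(l - 1) * z₁| := le_abs_self _
              _ = |l - 1| * |z₁| := abs_mul _ _
              _ ≤ 1 * |z₁| := by
                  refine mul_le_mul_of_nonneg_right ?_ habs
                  rw [abs_le]; constructor <;> linarith
              _ = |z₁| := one_mul _
          nlinarith
        · have hj : l * z₁ ≤ Real.log (∫ ω, Real.exp (l * Y ω) ∂P) := by
            have := jensen_rpow (P := P) (Y := Y) (a := 1) (p := l) hl1.le int1
              (by simpa only [mul_one] using hint)
            simpa only [mul_one] using this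
          linarith
  · rintro ⟨l₀, hl₀, hint₀⟩
    have hY := integrable_Y_of_neg hmeas hneg hl₀ hint₀
    have hm := mean_neg hmeas hY hneg
    set m : ℝ := ∫ ω, Y ω ∂P with hmdef
    set Λ₀ : ℝ := Real.log (∫ ω, Real.exp (l₀ * Y ω) ∂P) with hΛ₀
    have hjs : l₀ * m < Λ₀ := jensen_exp_strict hY hnonconst (ne_of_lt hl₀) hint₀
    set z₂ : ℝ := Λ₀ / l₀ with hz₂
    have hz₂m : z₂ < m := by
      rw [hz₂, div_lt_iff_of_neg hl₀]
      nlinarith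
    refine ⟨z₂, ?_, ?_⟩
    · rw [hμ, mu_formula hY hneg, ENNReal.ofReal_lt_ofReal_iff (by linarith)]
      linarith
    · have hC : 0 ≤ l₀ * (z₂ - m) := by nlinarith
      apply legendre_lt_top (C := l₀ * (z₂ - m))
      intro l hint
      rcases le_or_gt l₀ l with hll | hll
      · have hj := jensen_exp hY hint
        have h2 : l * (z₂ - m) ≤ l₀ * (z₂ - m) :=
          mul_le_mul_of_nonpos_right hll (by linarith)
        nlinarith
      · have hp : 1 ≤ l / l₀ := by
          rw [le_div_iff_of_neg hl₀]; linarith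
        have hpa : (l / l₀) * l₀ = l := div_mul_cancel₀ l (ne_of_lt hl₀)
        have hj := jensen_rpow (P := P) (Y := Y) hp hint₀ (by rw [hpa]; exact hint)
        rw [hpa] at hj
        have hid : l * z₂ = (l / l₀) * Λ₀ := by rw [hz₂]; ring
        linarith
end

section
/- Let X ∈ [0,1) have a density (possibly unbounded) and let z ≥ −μ with Λ*(z) < +∞, where μ = E[−log X] and Λ* is the Legendre transform of λ ↦ log E[X^λ]. Then for every δ > 0 there exists a random variable X_δ ≤ X (on the same probability space) whose law has a bounded density on (0,1) plus an atom at 0, such that Λ*(z) ≤ Λ*_δ(z) ≤ Λ*(z) + δ, where Λ*_δ(z) = sup_{λ ≥ 0}{λz − log E[X_δ^λ]} ∨ (−log P(X_δ > 0)). -/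
open MeasureTheory Filter
open scoped ENNReal Classical

/-- The rate function of a variable `X_δ ∈ [0,1)` with a possible atom at `0`:
`Λ*_δ(z) = sup_{λ ≥ 0} {λ z − log E[X_δ^λ]} ∨ (−log P(X_δ > 0))`. -/
noncomputable def legendreAtom {Ω : Type*} [MeasurableSpace Ω] (P : Measure Ω)
    (Xd : Ω → ℝ) (z : ℝ) : EReal :=
  max ((- Real.log ((P {ω | 0 < Xd ω}).toReal) : ℝ) : EReal)
    (⨆ l : {l : ℝ // 0 ≤ l},
      (((l : ℝ) * z - Real.log (∫ ω, Xd ω ^ (l : ℝ) ∂P) : ℝ) : EReal))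

/-- Approximation of an attachment distribution with (possibly unbounded) density by
one with bounded density plus an atom at `0`, changing the rate function at `z`
by at most `δ`. -/
theorem bounded_density_approximation
    {Ω : Type*} [MeasurableSpace Ω] (P : Measure Ω) [IsProbabilityMeasure P]
    (X : Ω → ℝ) (hmeas : Measurable X)
    (hrange : ∀ ω, X ω ∈ Set.Ico (0 : ℝ) 1)
    (hdens : ∃ f : ℝ → ℝ≥0∞, P.map X = volume.withDensity f)
    (μ : ℝ≥0∞) (hμ : μ = ∫⁻ ω, ENNReal.ofReal (- Real.log (X ω)) ∂P)
    (z : ℝ) (hz : ENNReal.ofReal (-z) ≤ μ)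
    (hfin : legendreE P (fun ω => Real.log (X ω)) z < ⊤) :
    ∀ δ : ℝ, 0 < δ →
      ∃ Xd : Ω → ℝ, Measurable Xd ∧
        (∀ ω, Xd ω ≤ X ω) ∧
        (∀ ω, Xd ω ∈ Set.Ico (0 : ℝ) 1) ∧
        (∃ κ : ℝ, ∀ s : Set ℝ, MeasurableSet s → s ⊆ Set.Ioo 0 1 →
          P (Xd ⁻¹' s) ≤ ENNReal.ofReal κ * volume s) ∧
        legendreE P (fun ω => Real.log (X ω)) z ≤ legendreAtom P Xd z ∧
        legendreAtom P Xd z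
          ≤ legendreE P (fun ω => Real.log (X ω)) z + (δ : EReal) := by
  intro δ hδ
  obtain ⟨f, hf⟩ := hdens
  -- the law of X is absolutely continuous w.r.t. Lebesgue
  have hac : P.map X ≪ (volume : Measure ℝ) := by
    refine Measure.AbsolutelyContinuous.mk fun s hs h0 => ?_
    rw [hf, withDensity_apply _ hs, Measure.restrict_eq_zero.mpr h0, lintegral_zero_measure]
  have hprob : IsProbabilityMeasure (P.map X) := Measure.isProbabilityMeasure_map hmeas.aemeasurable
  set g : ℝ → ℝ≥0∞ := (P.map X).rnDeriv volume with hgdef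
  have hg : Measurable g := Measure.measurable_rnDeriv _ _
  have hgd : volume.withDensity g = P.map X := Measure.withDensity_rnDeriv_eq _ _ hac
  have hνt : ∀ t : Set ℝ, MeasurableSet t → P (X ⁻¹' t) = ∫⁻ x in t, g x := by
    intro t ht
    rw [← Measure.map_apply hmeas ht, ← hgd, withDensity_apply _ ht]
  have hnull : ∀ t : Set ℝ, MeasurableSet t → volume t = 0 → P (X ⁻¹' t) = 0 := by
    intro t ht h0
    rw [hνt t ht, Measure.restrict_eq_zero.mpr h0, lintegral_zero_measure]
  have hX0 : P {ω | X ω = 0} = 0 :=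
    hnull {(0:ℝ)} (measurableSet_singleton 0) (measure_singleton 0)
  have hXpos : ∀ᵐ ω ∂P, 0 < X ω := by
    rw [ae_iff]
    refine measure_mono_null (fun ω h => ?_) hX0
    exact le_antisymm (not_lt.mp h) (hrange ω).1
  set Y : Ω → ℝ := fun ω => Real.log (X ω) with hYdef
  have hYmeas : Measurable Y := Real.measurable_log.comp hmeas
  have hYnonpos : ∀ ω, Y ω ≤ 0 := fun ω => Real.log_nonpos (hrange ω).1 (hrange ω).2.le
  have hint : ∀ l : ℝ, 0 ≤ l → Integrable (fun ω => Real.exp (l * Y ω)) P := by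
    intro l hl
    refine ⟨((hYmeas.const_mul l).exp).aestronglyMeasurable, ?_⟩
    refine HasFiniteIntegral.of_bounded (C := (1:ℝ)) (ae_of_all _ fun ω => ?_)
    rw [Real.norm_eq_abs, abs_of_pos (Real.exp_pos _)]
    exact Real.exp_le_one_iff.mpr (mul_nonpos_iff.mpr (Or.inl ⟨hl, hYnonpos ω⟩))
  set I : ℝ → ℝ := fun l => ∫ ω, Real.exp (l * Y ω) ∂P with hIdef
  have hIpos : ∀ l : ℝ, 0 ≤ l → 0 < I l := by
    intro l hl
    rw [hIdef]
    rw [integral_pos_iff_support_of_nonneg (fun ω => (Real.exp_pos _).le) (hint l hl)]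
    have : Function.support (fun ω => Real.exp (l * Y ω)) = Set.univ := by
      ext ω; simp [Function.mem_support, Real.exp_ne_zero]
    rw [this, measure_univ]
    norm_num
  have hcgf : ∀ l : ℝ, 0 ≤ l → cgfE P Y l = ((Real.log (I l) : ℝ) : EReal) := by
    intro l hl
    simp only [cgfE, if_pos (hint l hl), hIdef]
  have hLE0 : (0 : EReal) ≤ legendreE P Y z := by
    have h0 : ((0 * z : ℝ) : EReal) - cgfE P Y 0 ≤ legendreE P Y z :=
      le_iSup (fun l : ℝ => ((l * z : ℝ) : EReal) - cgfE P Y l) 0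
    have hI0 : I 0 = 1 := by
      simp [hIdef, measure_univ]
    rw [hcgf 0 le_rfl, hI0] at h0
    simpa using h0
  have hLEbot : legendreE P Y z ≠ ⊥ := by
    intro h
    rw [h] at hLE0
    exact absurd hLE0 (by simp)
  set L : ℝ := (legendreE P Y z).toReal with hLdef
  have hLcoe : ((L : ℝ) : EReal) = legendreE P Y z := EReal.coe_toReal hfin.ne hLEbot
  have hL0 : 0 ≤ L := by
    have h : ((0:ℝ) : EReal) ≤ ((L:ℝ) : EReal) := by
      rw [hLcoe]; exact_mod_cast hLE0
    exact EReal.coe_le_coe_iff.mp h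
  have hkeyI : ∀ l : ℝ, 0 ≤ l → Real.exp (l * z - L) ≤ I l := by
    intro l hl
    have h1 : ((l * z : ℝ) : EReal) - cgfE P Y l ≤ ((L : ℝ) : EReal) := by
      rw [hLcoe]; exact le_iSup (fun l : ℝ => ((l * z : ℝ) : EReal) - cgfE P Y l) l
    rw [hcgf l hl, ← EReal.coe_sub] at h1
    have h2 : l * z - Real.log (I l) ≤ L := EReal.coe_le_coe_iff.mp h1
    have h3 : Real.exp (l * z - L) ≤ Real.exp (Real.log (I l)) :=
      Real.exp_le_exp.mpr (by linarith)
    rwa [Real.exp_log (hIpos l hl)] at h3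
  have hIX : ∀ l : ℝ, I l = ∫ ω, X ω ^ l ∂P := by
    intro l
    refine integral_congr_ae ?_
    filter_upwards [hXpos] with ω hω
    rw [Real.rpow_def_of_pos hω, mul_comm (Real.log (X ω)) l]
  have hδ1 : 0 < 1 - Real.exp (-δ) := by
    have : Real.exp (-δ) < 1 := Real.exp_lt_one_iff.mpr (neg_lt_zero.mpr hδ)
    linarith
  -- choice of parameters η, a, M, q
  obtain ⟨η, a, M, q, hη, hηδ, ha0, ha1, hM0, hbranch⟩ :
      ∃ η a M q : ℝ, 0 < η ∧ η ≤ 1 - Real.exp (-δ) ∧ 0 < a ∧ a < 1 ∧ 0 ≤ M ∧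
        ∀ l : ℝ, 0 ≤ l →
          η ≤ (1 - Real.exp (-δ)) * Real.exp (l * z - L) ∨
          (Real.exp (l * z - (L + δ)) ≤ a ^ l * q ∧ q + η ≤ (P {ω | a ≤ X ω}).toReal) := by
    rcases le_or_gt 0 z with hz0 | hz0
    · refine ⟨(1 - Real.exp (-δ)) * Real.exp (-L), 1/2, 0, 0, by positivity, ?_, by norm_num,
        by norm_num, le_rfl, fun l hl => Or.inl ?_⟩
      · have h1 : Real.exp (-L) ≤ 1 := Real.exp_le_one_iff.mpr (by linarith)
        nlinarith
      · refine mul_le_mul_of_nonneg_left ?_ hδ1.le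
        exact Real.exp_le_exp.mpr (by nlinarith)
    · -- z < 0 : find a point a > exp z with positive upper-tail probability
      have ha : ∃ a : ℝ, Real.exp z < a ∧ 0 < P {ω | a ≤ X ω} := by
        by_contra hcon
        push_neg at hcon
        have hcon' : ∀ a : ℝ, Real.exp z < a → P {ω | a ≤ X ω} = 0 := fun a hh =>
          le_antisymm (hcon a hh) zero_le
        have hlt : P {ω | Real.exp z < X ω} = 0 := by
          have hsub : {ω | Real.exp z < X ω} ⊆
              ⋃ n : ℕ, {ω | Real.exp z + 1/(n+1) ≤ X ω} := by
            intro ω hω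
            obtain ⟨n, hn⟩ := exists_nat_one_div_lt (ε := X ω - Real.exp z) (sub_pos.mpr hω)
            refine Set.mem_iUnion.mpr ⟨n, ?_⟩
            have : (1:ℝ)/(n+1) < X ω - Real.exp z := by exact_mod_cast hn
            simp only [Set.mem_setOf_eq]
            linarith
          refine measure_mono_null hsub (measure_iUnion_null fun n => hcon' _ ?_)
          have h1 : (0:ℝ) < 1/((n:ℝ)+1) := by positivity
          linarith
        have heq : P {ω | X ω = Real.exp z} = 0 :=
          hnull {Real.exp z} (measurableSet_singleton _) (measure_singleton _)
        have hae : ∀ᵐ ω ∂P, X ω < Real.exp z := by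
          rw [ae_iff]
          refine measure_mono_null (fun ω h => ?_) (measure_union_null hlt heq)
          rcases lt_or_eq_of_le (not_lt.mp h) with h1 | h1
          · exact Or.inl h1
          · exact Or.inr h1.symm
        -- dominated convergence contradiction
        have hdom : ∀ n : ℕ, ∀ᵐ ω ∂P, ‖(X ω * Real.exp (-z)) ^ n‖ ≤ (1:ℝ) := by
          intro n
          filter_upwards [hae] with ω h1
          rw [norm_pow, Real.norm_eq_abs,
            abs_of_nonneg (mul_nonneg (hrange ω).1 (Real.exp_pos _).le)]
          refine pow_le_one₀ (mul_nonneg (hrange ω).1 (Real.exp_pos _).le) ?_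
          rw [Real.exp_neg]
          calc X ω * (Real.exp z)⁻¹ ≤ Real.exp z * (Real.exp z)⁻¹ :=
                mul_le_mul_of_nonneg_right h1.le (by positivity)
            _ = 1 := mul_inv_cancel₀ (Real.exp_ne_zero z)
        have hmeasF : ∀ n : ℕ,
            AEStronglyMeasurable (fun ω => (X ω * Real.exp (-z)) ^ n) P := fun n =>
          ((hmeas.mul_const _).pow_const n).aestronglyMeasurable
        have htendsto : Tendsto (fun n => ∫ ω, (X ω * Real.exp (-z)) ^ n ∂P)
            atTop (nhds (∫ ω, (0:ℝ) ∂P)) := by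
          refine tendsto_integral_of_dominated_convergence (fun _ => (1:ℝ)) hmeasF
            (integrable_const 1) hdom ?_
          filter_upwards [hae, hXpos] with ω h1 h2
          refine tendsto_pow_atTop_nhds_zero_of_lt_one
            (mul_nonneg (hrange ω).1 (Real.exp_pos _).le) ?_
          rw [Real.exp_neg]
          calc X ω * (Real.exp z)⁻¹ < Real.exp z * (Real.exp z)⁻¹ :=
                mul_lt_mul_of_pos_right h1 (by positivity)
            _ = 1 := mul_inv_cancel₀ (Real.exp_ne_zero z)
        have hlow : ∀ n : ℕ, Real.exp (-L) ≤ ∫ ω, (X ω * Real.exp (-z)) ^ n ∂P := by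
          intro n
          have h1 : Real.exp ((n:ℝ) * z - L) ≤ I (n:ℝ) := hkeyI _ (Nat.cast_nonneg n)
          have h2 : I (n:ℝ) = ∫ ω, X ω ^ n ∂P := by
            rw [hIX]
            exact integral_congr_ae (ae_of_all _ fun ω => Real.rpow_natCast _ n)
          have h3 : ∫ ω, (X ω * Real.exp (-z)) ^ n ∂P
              = (∫ ω, X ω ^ n ∂P) * Real.exp (-z) ^ n := by
            simp_rw [mul_pow]
            exact integral_mul_const _ _
          rw [h3, ← h2]
          have h4 : Real.exp (-z) ^ n = Real.exp ((n:ℝ) * (-z)) := (Real.exp_nat_mul _ n).symm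
          have h5 : Real.exp (-L) = Real.exp ((n:ℝ) * z - L) * Real.exp ((n:ℝ) * (-z)) := by
            rw [← Real.exp_add]; ring_nf
          rw [h5, h4]
          exact mul_le_mul_of_nonneg_right h1 (Real.exp_pos _).le
        have hfin0 : Real.exp (-L) ≤ 0 := by
          have h := ge_of_tendsto htendsto (Eventually.of_forall hlow)
          simpa using h
        exact absurd hfin0 (not_le.mpr (Real.exp_pos _))
      obtain ⟨a, haz, hpa⟩ := ha
      have ha00 : 0 < a := lt_trans (Real.exp_pos z) haz
      have ha1 : a < 1 := by
        by_contra hcon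
        push_neg at hcon
        have : {ω | a ≤ X ω} = ∅ := by
          ext ω
          simp only [Set.mem_setOf_eq, Set.mem_empty_iff_false, iff_false, not_le]
          exact lt_of_lt_of_le (hrange ω).2 hcon
        rw [this] at hpa
        simp at hpa
      set p : ℝ := (P {ω | a ≤ X ω}).toReal with hpdef
      have hp : 0 < p := ENNReal.toReal_pos hpa.ne' (measure_ne_top P _)
      have hlog : z < Real.log a := (Real.lt_log_iff_exp_lt ha00).mpr haz
      set M0 : ℝ := max 0 ((- Real.log (p/2) - L - δ) / (Real.log a - z)) with hM0def
      have hM0 : 0 ≤ M0 := le_max_left _ _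
      have hM0q : (- Real.log (p/2) - L - δ) / (Real.log a - z) ≤ M0 := le_max_right _ _
      have hM0ineq : - Real.log (p/2) - L - δ ≤ M0 * (Real.log a - z) :=
        (div_le_iff₀ (sub_pos.mpr hlog)).mp hM0q
      have hM0z : M0 * z ≤ 0 := mul_nonpos_iff.mpr (Or.inl ⟨hM0, hz0.le⟩)
      have hexpM : Real.exp (M0 * z - L) ≤ 1 := Real.exp_le_one_iff.mpr (by linarith)
      refine ⟨min (p/2) ((1 - Real.exp (-δ)) * Real.exp (M0 * z - L)), a, M0, p/2,
        lt_min (by positivity) (by positivity), ?_, ha00, ha1, hM0, ?_⟩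
      · calc min (p/2) ((1 - Real.exp (-δ)) * Real.exp (M0 * z - L))
            ≤ (1 - Real.exp (-δ)) * Real.exp (M0 * z - L) := min_le_right _ _
          _ ≤ (1 - Real.exp (-δ)) * 1 := mul_le_mul_of_nonneg_left hexpM hδ1.le
          _ = 1 - Real.exp (-δ) := mul_one _
      · intro l hl
        rcases le_or_gt l M0 with h | h
        · left
          have h1 : M0 * z ≤ l * z := mul_le_mul_of_nonpos_right h hz0.le
          calc min (p/2) ((1 - Real.exp (-δ)) * Real.exp (M0 * z - L))
              ≤ (1 - Real.exp (-δ)) * Real.exp (M0 * z - L) := min_le_right _ _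
            _ ≤ (1 - Real.exp (-δ)) * Real.exp (l * z - L) :=
                mul_le_mul_of_nonneg_left (Real.exp_le_exp.mpr (by linarith)) hδ1.le
        · right
          constructor
          · have h1 : a ^ l = Real.exp (l * Real.log a) := by
              rw [Real.rpow_def_of_pos ha00, mul_comm]
            have h2 : a ^ l * (p/2) = Real.exp (l * Real.log a + Real.log (p/2)) := by
              rw [Real.exp_add, ← h1, Real.exp_log (by positivity)]
            rw [h2]
            refine Real.exp_le_exp.mpr ?_
            have h4 : M0 * (Real.log a - z) ≤ l * (Real.log a - z) :=
              mul_le_mul_of_nonneg_right h.le (sub_pos.mpr hlog).le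
            nlinarith
          · have hmin := min_le_left (p/2) ((1 - Real.exp (-δ)) * Real.exp (M0 * z - L))
            rw [← hpdef]
            linarith
  -- choose the truncation level b = n
  set S : ℕ → Set ℝ := fun n => {x | (n : ℝ≥0∞) < g x} with hSdef
  have hSm : ∀ n, MeasurableSet (S n) := fun n => hg measurableSet_Ioi
  have hSanti : Antitone S := by
    intro n m hnm x hx
    have h1 : (n : ℝ≥0∞) ≤ (m : ℝ≥0∞) := Nat.cast_le.mpr hnm
    exact lt_of_le_of_lt h1 hx
  have hg_int : ∫⁻ x, g x ∂(volume : Measure ℝ) = 1 := by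
    have h := congrArg (fun m : Measure ℝ => m Set.univ) hgd
    simpa [withDensity_apply _ MeasurableSet.univ] using h
  have hgtop : (volume : Measure ℝ) (g ⁻¹' {⊤}) = 0 := by
    have h := ae_lt_top hg (by rw [hg_int]; exact ENNReal.one_ne_top)
    rw [ae_iff] at h
    have hss : g ⁻¹' {⊤} ⊆ {x | ¬ g x < ⊤} := by
      intro x hx
      simp only [Set.mem_preimage, Set.mem_singleton_iff] at hx
      simp [hx]
    exact measure_mono_null hss h
  have hInter : (P.map X) (⋂ n, S n) = 0 := by
    have hsub : (⋂ n, S n) ⊆ g ⁻¹' {⊤} := by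
      intro x hx
      simp only [Set.mem_iInter] at hx
      simp only [Set.mem_preimage, Set.mem_singleton_iff]
      by_contra hcon
      obtain ⟨k, hk⟩ := ENNReal.exists_nat_gt hcon
      exact absurd (hx k) (not_lt.mpr hk.le)
    have htop : (P.map X) (g ⁻¹' {⊤}) = 0 := by
      rw [← hgd, withDensity_apply _ (hg (measurableSet_singleton ⊤)),
        Measure.restrict_eq_zero.mpr hgtop, lintegral_zero_measure]
    exact measure_mono_null hsub htop
  have htmeas : Tendsto (fun n => (P.map X) (S n)) atTop (nhds 0) := by
    have h := tendsto_measure_iInter_atTop (μ := P.map X)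
      (fun n => (hSm n).nullMeasurableSet) hSanti ⟨0, measure_ne_top _ _⟩
    rw [hInter] at h
    exact h
  obtain ⟨n, hn⟩ : ∃ n : ℕ, (P.map X) (S n) ≤ ENNReal.ofReal η := by
    have h : ∀ᶠ n in atTop, (P.map X) (S n) < ENNReal.ofReal η :=
      htmeas.eventually_lt_const (ENNReal.ofReal_pos.mpr hη)
    exact h.exists.imp fun n hh => hh.le
  -- define the truncated variable
  set Xd : Ω → ℝ := fun ω => if (n:ℝ≥0∞) < g (X ω) then 0 else X ω with hXddef
  have hXdmeas : Measurable Xd :=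
    Measurable.ite ((hg.comp hmeas) measurableSet_Ioi) measurable_const hmeas
  have hXd_le : ∀ ω, Xd ω ≤ X ω := by
    intro ω
    by_cases h : (n:ℝ≥0∞) < g (X ω) <;> simp [hXddef, h, (hrange ω).1]
  have hXd_mem : ∀ ω, Xd ω ∈ Set.Ico (0:ℝ) 1 := by
    intro ω
    by_cases h : (n:ℝ≥0∞) < g (X ω)
    · simp [hXddef, h]
    · simpa [hXddef, h] using hrange ω
  set Aset : Set Ω := {ω | (n:ℝ≥0∞) < g (X ω)} with hAdef
  have hAmeas : MeasurableSet Aset := (hg.comp hmeas) measurableSet_Ioi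
  have hPA : P Aset ≤ ENNReal.ofReal η := by
    have h : Aset = X ⁻¹' (S n) := rfl
    rw [h, ← Measure.map_apply hmeas (hSm n)]
    exact hn
  have hPAr : (P Aset).toReal ≤ η := ENNReal.toReal_le_of_le_ofReal hη.le hPA
  -- basic facts about Xd
  have hintr : ∀ (W : Ω → ℝ), Measurable W → (∀ ω, W ω ∈ Set.Ico (0:ℝ) 1) →
      ∀ l : ℝ, 0 ≤ l → Integrable (fun ω => W ω ^ l) P := by
    intro W hW hWm l hl
    refine ⟨((Real.continuous_rpow_const hl).measurable.comp hW).aestronglyMeasurable, ?_⟩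
    refine HasFiniteIntegral.of_bounded (C := (1:ℝ)) (ae_of_all _ fun ω => ?_)
    rw [Real.norm_eq_abs, abs_of_nonneg (Real.rpow_nonneg (hWm ω).1 l)]
    exact Real.rpow_le_one (hWm ω).1 (hWm ω).2.le hl
  have hXint : ∀ l : ℝ, 0 ≤ l → Integrable (fun ω => X ω ^ l) P := hintr X hmeas hrange
  have hXdint : ∀ l : ℝ, 0 ≤ l → Integrable (fun ω => Xd ω ^ l) P := hintr Xd hXdmeas hXd_mem
  -- the truncation removes at most η of each moment
  have hJd_sub : ∀ l : ℝ, 0 ≤ l → I l - η ≤ ∫ ω, Xd ω ^ l ∂P := by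
    intro l hl
    have hXi := hXint l hl
    have hXdi := hXdint l hl
    have hmono : ∫ ω, (X ω ^ l - Xd ω ^ l) ∂P
        ≤ ∫ ω, Set.indicator Aset (fun _ => (1:ℝ)) ω ∂P := by
      refine integral_mono (hXi.sub hXdi) ((integrable_const (1:ℝ)).indicator hAmeas)
        fun ω => ?_
      by_cases h : ω ∈ Aset
      · rw [Set.indicator_of_mem h]
        have h1 : X ω ^ l ≤ 1 := Real.rpow_le_one (hrange ω).1 (hrange ω).2.le hl
        have h2 : 0 ≤ Xd ω ^ l := Real.rpow_nonneg (hXd_mem ω).1 _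
        simp only
        linarith
      · rw [Set.indicator_of_notMem h]
        have hXe : Xd ω = X ω := if_neg h
        simp [hXe]
    rw [integral_sub hXi hXdi, integral_indicator_const (1:ℝ) hAmeas, smul_eq_mul,
      mul_one] at hmono
    have h3 := hIX l
    linarith [hPAr, show P.real Aset = (P Aset).toReal from rfl]
  -- lower bounds on moments via the tail set {a ≤ Xd}
  have hXda_meas : MeasurableSet {ω | a ≤ Xd ω} := measurableSet_le measurable_const hXdmeas
  have htail_int : ∀ l : ℝ, 0 ≤ l →
      a ^ l * (P {ω | a ≤ Xd ω}).toReal ≤ ∫ ω, Xd ω ^ l ∂P := by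
    intro l hl
    have hmono : ∫ ω, Set.indicator {ω | a ≤ Xd ω} (fun _ => a ^ l) ω ∂P
        ≤ ∫ ω, Xd ω ^ l ∂P := by
      refine integral_mono ((integrable_const (a ^ l)).indicator hXda_meas) (hXdint l hl)
        fun ω => ?_
      by_cases h : ω ∈ {ω | a ≤ Xd ω}
      · rw [Set.indicator_of_mem h]
        exact Real.rpow_le_rpow ha0.le h hl
      · rw [Set.indicator_of_notMem h]
        exact Real.rpow_nonneg (hXd_mem ω).1 _
    rwa [integral_indicator_const _ hXda_meas, smul_eq_mul, mul_comm] at hmono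
  -- the key moment lower bound
  have hkey : ∀ l : ℝ, 0 ≤ l → Real.exp (l * z - (L + δ)) ≤ ∫ ω, Xd ω ^ l ∂P := by
    intro l hl
    rcases hbranch l hl with h | ⟨h1, h2⟩
    · have hJ := hJd_sub l hl
      have hI := hkeyI l hl
      have he : Real.exp (l * z - (L + δ)) = Real.exp (-δ) * Real.exp (l * z - L) := by
        rw [← Real.exp_add]; ring_nf
      nlinarith [Real.exp_pos (l * z - L)]
    · have hsub : {ω | a ≤ X ω} ⊆ {ω | a ≤ Xd ω} ∪ Aset := by
        intro ω h
        by_cases hA : ω ∈ Aset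
        · exact Or.inr hA
        · refine Or.inl ?_
          have hXe : Xd ω = X ω := if_neg hA
          simpa [Set.mem_setOf_eq, hXe] using h
      have hu1 : P {ω | a ≤ X ω} ≤ P {ω | a ≤ Xd ω} + ENNReal.ofReal η :=
        le_trans (measure_mono hsub)
          (le_trans (measure_union_le _ _) (add_le_add (le_refl _) hPA))
      have hu2 : (P {ω | a ≤ X ω}).toReal ≤ (P {ω | a ≤ Xd ω}).toReal + η := by
        have hne : P {ω | a ≤ Xd ω} + ENNReal.ofReal η ≠ ⊤ :=
          ENNReal.add_ne_top.mpr ⟨measure_ne_top _ _, ENNReal.ofReal_ne_top⟩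
        have := ENNReal.toReal_mono hne hu1
        rwa [ENNReal.toReal_add (measure_ne_top _ _) ENNReal.ofReal_ne_top,
          ENNReal.toReal_ofReal hη.le] at this
      calc Real.exp (l * z - (L + δ)) ≤ a ^ l * q := h1
        _ ≤ a ^ l * (P {ω | a ≤ Xd ω}).toReal := by
            refine mul_le_mul_of_nonneg_left ?_ (Real.rpow_nonneg ha0.le l)
            linarith
        _ ≤ ∫ ω, Xd ω ^ l ∂P := htail_int l hl
  have hJdpos : ∀ l : ℝ, 0 ≤ l → 0 < ∫ ω, Xd ω ^ l ∂P := fun l hl =>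
    lt_of_lt_of_le (Real.exp_pos _) (hkey l hl)
  have hupper_l : ∀ l : ℝ, 0 ≤ l → l * z - Real.log (∫ ω, Xd ω ^ l ∂P) ≤ L + δ := by
    intro l hl
    have h := Real.log_le_log (Real.exp_pos _) (hkey l hl)
    rw [Real.log_exp] at h
    linarith
  -- the atom probability
  have hXd0meas : MeasurableSet {ω | 0 < Xd ω} := measurableSet_lt measurable_const hXdmeas
  set pd : ℝ := (P {ω | 0 < Xd ω}).toReal with hpddef
  have hcompl : P ({ω | 0 < Xd ω}ᶜ) ≤ ENNReal.ofReal η := by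
    have hsub : {ω | 0 < Xd ω}ᶜ ⊆ {ω | X ω = 0} ∪ Aset := by
      intro ω hω
      by_cases h : ω ∈ Aset
      · exact Or.inr h
      · refine Or.inl ?_
        have hXe : Xd ω = X ω := if_neg h
        have hω' : ¬ 0 < Xd ω := hω
        rw [hXe] at hω'
        exact le_antisymm (not_lt.mp hω') (hrange ω).1
    calc P ({ω | 0 < Xd ω}ᶜ) ≤ P ({ω | X ω = 0} ∪ Aset) := measure_mono hsub
      _ ≤ P {ω | X ω = 0} + P Aset := measure_union_le _ _
      _ ≤ ENNReal.ofReal η := by rw [hX0, zero_add]; exact hPA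
  have hpdlow : 1 - η ≤ pd := by
    have h1 : (1:ℝ≥0∞) ≤ P {ω | 0 < Xd ω} + ENNReal.ofReal η := by
      have h0 : P Set.univ ≤ P {ω | 0 < Xd ω} + P ({ω | 0 < Xd ω}ᶜ) :=
        le_of_eq (measure_add_measure_compl hXd0meas).symm
      rw [measure_univ] at h0
      exact le_trans h0 (add_le_add (le_refl _) hcompl)
    have hne : P {ω | 0 < Xd ω} + ENNReal.ofReal η ≠ ⊤ :=
      ENNReal.add_ne_top.mpr ⟨measure_ne_top _ _, ENNReal.ofReal_ne_top⟩
    have h2 := ENNReal.toReal_mono hne h1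
    rw [ENNReal.toReal_add (measure_ne_top _ _) ENNReal.ofReal_ne_top,
      ENNReal.toReal_ofReal hη.le, ENNReal.toReal_one] at h2
    linarith
  have hpdexp : Real.exp (-δ) ≤ pd := by linarith
  have hpd0 : 0 < pd := lt_of_lt_of_le (Real.exp_pos _) hpdexp
  have hpd1 : pd ≤ 1 := by
    rw [hpddef]
    exact ENNReal.toReal_le_of_le_ofReal one_pos.le (by simpa using prob_le_one)
  have hpdlog : - Real.log pd ≤ L + δ := by
    have h := Real.log_le_log (Real.exp_pos _) hpdexp
    rw [Real.log_exp] at h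
    linarith
  have hpdlog0 : 0 ≤ - Real.log pd := by
    have := Real.log_nonpos hpd0.le hpd1
    linarith
  -- assemble
  refine ⟨Xd, hXdmeas, hXd_le, hXd_mem, ⟨(n:ℝ), ?_⟩, ?_, ?_⟩
  · -- bounded density
    intro s hs hs01
    have hs0 : (0:ℝ) ∉ s := fun h => lt_irrefl (0:ℝ) (hs01 h).1
    have hpre : Xd ⁻¹' s = X ⁻¹' (s ∩ {x | ¬ (n:ℝ≥0∞) < g x}) := by
      ext ω
      simp only [Set.mem_preimage, Set.mem_inter_iff, Set.mem_setOf_eq, hXddef]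
      by_cases h : (n:ℝ≥0∞) < g (X ω)
      · simp only [if_pos h]
        exact ⟨fun hc => absurd hc hs0, fun hc => absurd h hc.2⟩
      · simp only [if_neg h]
        exact ⟨fun hc => ⟨hc, h⟩, fun hc => hc.1⟩
    have hmeas2 : MeasurableSet (s ∩ {x | ¬ (n:ℝ≥0∞) < g x}) :=
      hs.inter ((hg measurableSet_Ioi).compl)
    rw [hpre, hνt _ hmeas2]
    calc ∫⁻ x in s ∩ {x | ¬ (n:ℝ≥0∞) < g x}, g x
        ≤ ∫⁻ _ in s ∩ {x | ¬ (n:ℝ≥0∞) < g x}, (n:ℝ≥0∞) :=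
          setLIntegral_mono measurable_const fun x hx => not_lt.mp hx.2
      _ = (n:ℝ≥0∞) * volume (s ∩ {x | ¬ (n:ℝ≥0∞) < g x}) := setLIntegral_const _ _
      _ ≤ ENNReal.ofReal (n:ℝ) * volume s := by
          rw [ENNReal.ofReal_natCast]
          exact mul_le_mul_right (measure_mono Set.inter_subset_left) _
  · -- lower bound : legendreE ≤ legendreAtom
    rw [legendreE]
    refine iSup_le fun l => ?_
    rcases le_or_gt 0 l with hl | hl
    · rw [hcgf l hl]
      refine le_trans ?_ (le_max_right _ _)
      refine le_trans ?_ (le_iSup (fun l' : {l' : ℝ // 0 ≤ l'} =>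
        (((l' : ℝ) * z - Real.log (∫ ω, Xd ω ^ (l' : ℝ) ∂P) : ℝ) : EReal)) ⟨l, hl⟩)
      rw [← EReal.coe_sub]
      refine EReal.coe_le_coe_iff.mpr ?_
      have hle : ∫ ω, Xd ω ^ l ∂P ≤ ∫ ω, X ω ^ l ∂P :=
        integral_mono (hXdint l hl) (hXint l hl) fun ω =>
          Real.rpow_le_rpow (hXd_mem ω).1 (hXd_le ω) hl
      have hlog2 : Real.log (∫ ω, Xd ω ^ l ∂P) ≤ Real.log (I l) := by
        rw [hIX l]
        exact Real.log_le_log (hJdpos l hl) hle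
      simp only
      linarith
    · refine le_trans ?_ (le_max_left _ _)
      by_cases hi : Integrable (fun ω => Real.exp (l * Y ω)) P
      · rw [cgfE, if_pos hi, ← EReal.coe_sub]
        refine EReal.coe_le_coe_iff.mpr ?_
        -- show l * z ≤ log ∫ exp (l Y)
        have hYint : Integrable Y P := by
          have h0 : Integrable (fun ω => l * Y ω) P := by
            refine hi.mono' ((hYmeas.const_mul l).aestronglyMeasurable) ?_
            refine ae_of_all _ fun ω => ?_
            have h1 : 0 ≤ l * Y ω := mul_nonneg_of_nonpos_of_nonpos hl.le (hYnonpos ω)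
            rw [Real.norm_eq_abs, abs_of_nonneg h1]
            linarith [Real.add_one_le_exp (l * Y ω)]
          have h2 := h0.const_mul l⁻¹
          have h3 : (fun ω => l⁻¹ * (l * Y ω)) = Y := by
            funext ω
            rw [← mul_assoc, inv_mul_cancel₀ (ne_of_lt hl), one_mul]
          rwa [h3] at h2
        obtain ⟨m, hmdef⟩ : ∃ m : ℝ, ∫ ω, Y ω ∂P = m := ⟨_, rfl⟩
        have hm_nonpos : m ≤ 0 := hmdef ▸ integral_nonpos fun ω => hYnonpos ω
        have hmz : m ≤ z := by
          rcases le_or_gt 0 z with h | h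
          · linarith
          · have hnegY : Integrable (fun ω => -Y ω) P := hYint.neg
            have hμ2 : μ = ENNReal.ofReal (∫ ω, -Y ω ∂P) := by
              rw [hμ, ← ofReal_integral_eq_lintegral_ofReal hnegY
                (ae_of_all _ fun ω => neg_nonneg.mpr (hYnonpos ω))]
            rw [hμ2] at hz
            have h4 : -z ≤ ∫ ω, -Y ω ∂P :=
              (ENNReal.ofReal_le_ofReal_iff
                (integral_nonneg fun ω => neg_nonneg.mpr (hYnonpos ω))).mp hz
            rw [integral_neg, hmdef] at h4
            linarith
        have hpoint : ∀ ω, Real.exp (l * z) * (1 + l * (Y ω - z)) ≤ Real.exp (l * Y ω) := by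
          intro ω
          have h1 : l * (Y ω - z) + 1 ≤ Real.exp (l * (Y ω - z)) := Real.add_one_le_exp _
          have h2 : Real.exp (l * z) * Real.exp (l * (Y ω - z)) = Real.exp (l * Y ω) := by
            rw [← Real.exp_add]; ring_nf
          nlinarith [Real.exp_pos (l * z)]
        have hint2 : Integrable (fun ω => Real.exp (l * z) * (1 + l * (Y ω - z))) P := by
          refine Integrable.const_mul ?_ _
          exact (integrable_const (1:ℝ)).add (((hYint.sub (integrable_const z)).const_mul l))
        have hIlow : Real.exp (l * z) * (1 + l * (m - z)) ≤ ∫ ω, Real.exp (l * Y ω) ∂P := by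
          have h5 := integral_mono hint2 hi hpoint
          have h6 : ∫ ω, Real.exp (l * z) * (1 + l * (Y ω - z)) ∂P
              = Real.exp (l * z) * (1 + l * (m - z)) := by
            have e1 : (fun ω => Real.exp (l * z) * (1 + l * (Y ω - z)))
                = fun ω => Real.exp (l * z) * (1 - l * z) + Real.exp (l * z) * l * Y ω := by
              funext ω; ring
            rw [e1, integral_add (integrable_const _) (hYint.const_mul _),
              integral_const, integral_const_mul]
            simp only [Measure.real, measure_univ, ENNReal.toReal_one, smul_eq_mul, one_mul]
            rw [hmdef]
            ring
          rwa [h6] at h5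
        have h7 : Real.exp (l * z) ≤ ∫ ω, Real.exp (l * Y ω) ∂P := by
          have h8 : 0 ≤ l * (m - z) := mul_nonneg_of_nonpos_of_nonpos hl.le (by linarith)
          refine le_trans (le_mul_of_one_le_right (Real.exp_pos (l * z)).le ?_) hIlow
          linarith
        have h9 : l * z ≤ Real.log (∫ ω, Real.exp (l * Y ω) ∂P) := by
          have := Real.log_le_log (Real.exp_pos _) h7
          rwa [Real.log_exp] at this
        linarith
      · rw [cgfE, if_neg hi, EReal.sub_top]
        exact bot_le
  · -- upper bound : legendreAtom ≤ legendreE + δ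
    rw [legendreAtom, ← hLcoe]
    have hcoe : ((L:ℝ) : EReal) + ((δ:ℝ) : EReal) = ((L + δ : ℝ) : EReal) :=
      (EReal.coe_add _ _).symm
    rw [hcoe]
    refine max_le ?_ (iSup_le fun l => ?_)
    · exact EReal.coe_le_coe_iff.mpr (by linarith)
    · exact EReal.coe_le_coe_iff.mpr (hupper_l l.1 l.2)
end
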